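/- arXiv:2112.10396 — 7 statements merged into one kernel-verified Lean document; each statement's English description precedes it below -/
import Mathlib

section
/- Let n : [0,∞) → [0,∞) be a nondecreasing function vanishing on some interval [0, t₀] with t₀ > 0, let ρ > 0 be a non-integer real number and p = ⌊ρ⌋. If n(r)/r^ρ → 0 as r → ∞, then r^{p-ρ} · ∫₀^r n(t)/t^{p+1} dt → 0 and r^{p+1-ρ} · ∫_r^∞ n(t)/t^{p+2} dt → 0 as r → ∞ (in particular, the second integral is finite for all sufficiently large r). -/
open MeasureTheory Filter

/-- If `n` is a nondecreasing nonnegative function vanishing near `0`, `ρ > 0` is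
non-integer, `p = ⌊ρ⌋`, and `n(r)/r^ρ → 0`, then `r^(p-ρ) ∫₀^r n(t)/t^(p+1) dt → 0` and
`r^(p+1-ρ) ∫_r^∞ n(t)/t^(p+2) dt → 0` (the latter integral being finite for large `r`). -/
theorem stmt_3 (n : ℝ → ℝ) (hmono : MonotoneOn n (Set.Ici 0))
    (hnonneg : ∀ t, 0 ≤ t → 0 ≤ n t)
    (t₀ : ℝ) (ht₀ : 0 < t₀) (hvanish : ∀ t ∈ Set.Icc 0 t₀, n t = 0)
    (ρ : ℝ) (hρ : 0 < ρ) (hnotint : ∀ m : ℤ, ρ ≠ (m : ℝ))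
    (hlim : Tendsto (fun r => n r / r ^ ρ) atTop (nhds 0)) :
    (∀ᶠ r in atTop, IntegrableOn (fun t => n t / t ^ ((⌊ρ⌋₊ : ℝ) + 2)) (Set.Ioi r)) ∧
    Tendsto (fun r => r ^ ((⌊ρ⌋₊ : ℝ) - ρ) *
        ∫ t in Set.Ioc (0:ℝ) r, n t / t ^ ((⌊ρ⌋₊ : ℝ) + 1)) atTop (nhds 0) ∧
    Tendsto (fun r => r ^ ((⌊ρ⌋₊ : ℝ) + 1 - ρ) *
        ∫ t in Set.Ioi r, n t / t ^ ((⌊ρ⌋₊ : ℝ) + 2)) atTop (nhds 0) := by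
  set P : ℝ := (⌊ρ⌋₊ : ℝ) with hPdef
  have hP1 : P < ρ := by
    refine lt_of_le_of_ne (Nat.floor_le hρ.le) ?_
    intro h
    exact hnotint (⌊ρ⌋₊ : ℤ) (by exact_mod_cast h.symm)
  have hP2 : ρ < P + 1 := by
    have := Nat.lt_floor_add_one ρ
    rw [hPdef]; push_cast at this ⊢; linarith
  have hP0 : 0 ≤ P := by positivity
  -- measurability
  have hmeas : AEMeasurable n (volume.restrict (Set.Ici (0:ℝ))) :=
    aemeasurable_restrict_of_monotoneOn measurableSet_Ici hmono
  have hg_meas : ∀ (c : ℝ), 0 ≤ c → ∀ (s : Set ℝ), s ⊆ Set.Ici 0 →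
      AEStronglyMeasurable (fun t => n t / t ^ c) (volume.restrict s) := by
    intro c hc s hs
    have h1 : AEMeasurable n (volume.restrict s) :=
      hmeas.mono_measure (Measure.restrict_mono hs le_rfl)
    exact (h1.div (Real.continuous_rpow_const hc).measurable.aemeasurable).aestronglyMeasurable
  -- key quantitative bound
  have key : ∀ ε : ℝ, 0 < ε → ∃ R : ℝ, max t₀ 1 ≤ R ∧ ∀ t, R ≤ t → n t ≤ ε * t ^ ρ := by
    intro ε hε
    have h1 : ∀ᶠ r in atTop, n r / r ^ ρ < ε := hlim.eventually (gt_mem_nhds hε)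
    have h2 : ∀ᶠ r in atTop, max t₀ 1 ≤ r := eventually_ge_atTop _
    obtain ⟨R, hR⟩ := (h1.and h2).exists_forall_of_atTop
    refine ⟨max R (max t₀ 1), le_max_right _ _, fun t ht => ?_⟩
    have h3 := hR t (le_trans (le_max_left _ _) ht)
    have ht1 : (1:ℝ) ≤ t := le_trans (le_trans (le_max_right t₀ 1) (le_max_right R _)) ht
    have htpos : (0:ℝ) < t := lt_of_lt_of_le one_pos ht1
    have hpow : (0:ℝ) < t ^ ρ := Real.rpow_pos_of_pos htpos ρ
    have := (div_lt_iff₀ hpow).1 h3.1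
    linarith
  -- integrability on Ioc 0 r
  have I1 : ∀ c : ℝ, 0 ≤ c → ∀ r : ℝ, t₀ ≤ r →
      IntegrableOn (fun t => n t / t ^ c) (Set.Ioc 0 r) := by
    intro c hc r hr
    have hr0 : (0:ℝ) < r := lt_of_lt_of_le ht₀ hr
    have hbd : ∀ t ∈ Set.Ioc (0:ℝ) r, ‖n t / t ^ c‖ ≤ n r / t₀ ^ c := by
      intro t ht
      have ht0 : (0:ℝ) < t := ht.1
      have hnr : 0 ≤ n r := hnonneg r hr0.le
      have ht₀c : (0:ℝ) < t₀ ^ c := Real.rpow_pos_of_pos ht₀ c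
      rcases le_or_gt t t₀ with h | h
      · rw [hvanish t ⟨ht0.le, h⟩]
        simp only [zero_div, norm_zero]
        positivity
      · have hnt : 0 ≤ n t := hnonneg t ht0.le
        have htc : (0:ℝ) < t ^ c := Real.rpow_pos_of_pos ht0 c
        rw [Real.norm_of_nonneg (by positivity)]
        refine div_le_div₀ hnr ?_ ht₀c ?_
        · exact hmono ht0.le (Set.mem_Ici.2 hr0.le) ht.2
        · exact Real.rpow_le_rpow ht₀.le h.le hc
    have hconst : IntegrableOn (fun _ : ℝ => n r / t₀ ^ c) (Set.Ioc 0 r) volume :=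
      integrableOn_const measure_Ioc_lt_top.ne
    refine Integrable.mono' hconst
      (hg_meas c hc _ (fun x hx => le_of_lt hx.1)) ?_
    exact (ae_restrict_iff' measurableSet_Ioc).2 (ae_of_all _ hbd)
  -- pointwise bound and integrability on tails
  have I2 : ∀ ε : ℝ, 0 < ε → ∀ R : ℝ, 1 ≤ R → (∀ t, R ≤ t → n t ≤ ε * t ^ ρ) →
      ∀ r : ℝ, R ≤ r →
      (∀ t ∈ Set.Ioi r, n t / t ^ (P + 2) ≤ ε * t ^ (ρ - (P + 2))) ∧
      IntegrableOn (fun t => n t / t ^ (P + 2)) (Set.Ioi r) ∧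
      IntegrableOn (fun t => ε * t ^ (ρ - (P + 2))) (Set.Ioi r) := by
    intro ε hε R hR hkey r hr
    have hr0 : (0:ℝ) < r := lt_of_lt_of_le one_pos (le_trans hR hr)
    have hbd : ∀ t ∈ Set.Ioi r, n t / t ^ (P + 2) ≤ ε * t ^ (ρ - (P + 2)) := by
      intro t ht
      have ht0 : (0:ℝ) < t := lt_trans hr0 ht
      have htc : (0:ℝ) < t ^ (P + 2) := Real.rpow_pos_of_pos ht0 _
      have h1 : n t ≤ ε * t ^ ρ := hkey t (le_of_lt (lt_of_le_of_lt hr ht))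
      rw [Real.rpow_sub ht0, ← mul_div_assoc]
      exact div_le_div_of_nonneg_right h1 htc.le |>.trans_eq rfl
    have hInt2 : IntegrableOn (fun t => ε * t ^ (ρ - (P + 2))) (Set.Ioi r) :=
      (integrableOn_Ioi_rpow_of_lt (by linarith) hr0).const_mul ε
    refine ⟨hbd, ?_, hInt2⟩
    refine Integrable.mono' hInt2 (hg_meas (P + 2) (by linarith) _ ?_) ?_
    · intro x hx; exact le_of_lt (lt_trans hr0 hx)
    · refine (ae_restrict_iff' measurableSet_Ioi).2 (ae_of_all _ (fun t ht => ?_))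
      have ht0 : (0:ℝ) < t := lt_trans hr0 ht
      rw [Real.norm_of_nonneg (div_nonneg (hnonneg t ht0.le)
        (Real.rpow_pos_of_pos ht0 _).le)]
      exact hbd t ht
  -- part 1: eventual integrability
  obtain ⟨R₁, hR₁, hkey₁⟩ := key 1 one_pos
  have hR₁1 : (1:ℝ) ≤ R₁ := le_trans (le_max_right _ _) hR₁
  have part1 : ∀ᶠ r in atTop, IntegrableOn (fun t => n t / t ^ (P + 2)) (Set.Ioi r) := by
    filter_upwards [eventually_ge_atTop R₁] with r hr
    exact (I2 1 one_pos R₁ hR₁1 hkey₁ r hr).2.1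
  -- nonnegativity of the integrals
  have hnn : ∀ c : ℝ, ∀ s : Set ℝ, MeasurableSet s → s ⊆ Set.Ioi 0 →
      0 ≤ ∫ t in s, n t / t ^ c := by
    intro c s hs hsub
    refine setIntegral_nonneg hs (fun t ht => ?_)
    have ht0 : (0:ℝ) < t := hsub ht
    exact div_nonneg (hnonneg t ht0.le) (Real.rpow_pos_of_pos ht0 c).le
  -- part 3: tail limit
  have part3 : Tendsto (fun r => r ^ (P + 1 - ρ) *
      ∫ t in Set.Ioi r, n t / t ^ (P + 2)) atTop (nhds 0) := by
    rw [NormedAddCommGroup.tendsto_nhds_zero]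
    intro ε hε
    have hd : (0:ℝ) < P + 1 - ρ := by linarith
    set ε' : ℝ := (P + 1 - ρ) * ε / 2 with hε'def
    have hε' : 0 < ε' := by positivity
    obtain ⟨R, hRge, hkey⟩ := key ε' hε'
    have hR1 : (1:ℝ) ≤ R := le_trans (le_max_right _ _) hRge
    filter_upwards [eventually_ge_atTop R] with r hr
    have hr0 : (0:ℝ) < r := lt_of_lt_of_le one_pos (le_trans hR1 hr)
    obtain ⟨hbd, hInt, hInt2⟩ := I2 ε' hε' R hR1 hkey r hr
    have h1 : ∫ t in Set.Ioi r, n t / t ^ (P + 2) ≤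
        ∫ t in Set.Ioi r, ε' * t ^ (ρ - (P + 2)) :=
      setIntegral_mono_on hInt hInt2 measurableSet_Ioi hbd
    have h2 : ∫ t in Set.Ioi r, ε' * t ^ (ρ - (P + 2)) =
        ε' * (r ^ (ρ - (P + 1)) / (P + 1 - ρ)) := by
      rw [integral_const_mul, integral_Ioi_rpow_of_lt (by linarith) hr0]
      congr 1
      rw [show ρ - (P + 2) + 1 = ρ - (P + 1) by ring,
        show P + 1 - ρ = -(ρ - (P + 1)) by ring, div_neg, neg_div]
    have h3 : 0 ≤ ∫ t in Set.Ioi r, n t / t ^ (P + 2) :=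
      hnn _ _ measurableSet_Ioi (fun x hx => lt_trans hr0 hx)
    have hrpow : (0:ℝ) < r ^ (P + 1 - ρ) := Real.rpow_pos_of_pos hr0 _
    rw [Real.norm_of_nonneg (mul_nonneg hrpow.le h3)]
    have h4 : r ^ (P + 1 - ρ) * ∫ t in Set.Ioi r, n t / t ^ (P + 2) ≤
        r ^ (P + 1 - ρ) * (ε' * (r ^ (ρ - (P + 1)) / (P + 1 - ρ))) := by
      rw [← h2]
      exact mul_le_mul_of_nonneg_left h1 hrpow.le
    have h5 : r ^ (P + 1 - ρ) * (ε' * (r ^ (ρ - (P + 1)) / (P + 1 - ρ))) = ε / 2 := by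
      have hone : r ^ (P + 1 - ρ) * r ^ (ρ - (P + 1)) = 1 := by
        rw [← Real.rpow_add hr0]; norm_num
      rw [hε'def, show r ^ (P + 1 - ρ) * ((P + 1 - ρ) * ε / 2 * (r ^ (ρ - (P + 1)) / (P + 1 - ρ))) =
        (r ^ (P + 1 - ρ) * r ^ (ρ - (P + 1))) * ((P + 1 - ρ) / (P + 1 - ρ)) * ε / 2 by ring, hone,
        div_self (by linarith : P + 1 - ρ ≠ 0)]
      ring
    calc r ^ (P + 1 - ρ) * ∫ t in Set.Ioi r, n t / t ^ (P + 2) ≤ ε / 2 := h4.trans_eq h5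
      _ < ε := by linarith
  -- part 2
  have part2 : Tendsto (fun r => r ^ (P - ρ) *
      ∫ t in Set.Ioc (0:ℝ) r, n t / t ^ (P + 1)) atTop (nhds 0) := by
    rw [NormedAddCommGroup.tendsto_nhds_zero]
    intro ε hε
    have hd : (0:ℝ) < ρ - P := by linarith
    set ε' : ℝ := (ρ - P) * ε / 4 with hε'def
    have hε' : 0 < ε' := by positivity
    obtain ⟨R, hRge, hkey⟩ := key ε' hε'
    have hR1 : (1:ℝ) ≤ R := le_trans (le_max_right _ _) hRge
    have hRt₀ : t₀ ≤ R := le_trans (le_max_left _ _) hRge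
    have hR0 : (0:ℝ) < R := lt_of_lt_of_le one_pos hR1
    set C : ℝ := ∫ t in Set.Ioc (0:ℝ) R, n t / t ^ (P + 1) with hCdef
    have hC0 : 0 ≤ C := hnn _ _ measurableSet_Ioc (fun x hx => hx.1)
    -- r^(P-ρ) * C → 0
    have hsmall : ∀ᶠ r in atTop, r ^ (P - ρ) * C < ε / 2 := by
      have ht : Tendsto (fun r : ℝ => r ^ (P - ρ) * C) atTop (nhds (0 * C)) := by
        refine Tendsto.mul_const C ?_
        have := tendsto_rpow_neg_atTop hd
        convert this using 2 with r
        rw [show P - ρ = -(ρ - P) by ring]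
      rw [zero_mul] at ht
      exact ht.eventually (gt_mem_nhds (by positivity))
    filter_upwards [eventually_ge_atTop R, hsmall] with r hr hsm
    have hr0 : (0:ℝ) < r := lt_of_lt_of_le hR0 hr
    have hIr : IntegrableOn (fun t => n t / t ^ (P + 1)) (Set.Ioc 0 r) :=
      I1 (P + 1) (by linarith) r (le_trans hRt₀ hr)
    have hIR : IntegrableOn (fun t => n t / t ^ (P + 1)) (Set.Ioc 0 R) :=
      hIr.mono_set (Set.Ioc_subset_Ioc le_rfl hr)
    have hIRr : IntegrableOn (fun t => n t / t ^ (P + 1)) (Set.Ioc R r) :=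
      hIr.mono_set (Set.Ioc_subset_Ioc hR0.le le_rfl)
    have hsplit : ∫ t in Set.Ioc (0:ℝ) r, n t / t ^ (P + 1) =
        C + ∫ t in Set.Ioc R r, n t / t ^ (P + 1) := by
      rw [hCdef, ← setIntegral_union (Set.Ioc_disjoint_Ioc_of_le le_rfl) measurableSet_Ioc hIR hIRr,
        Set.Ioc_union_Ioc_eq_Ioc hR0.le hr]
    -- bound the middle integral
    have hbd : ∀ t ∈ Set.Ioc R r, n t / t ^ (P + 1) ≤ ε' * t ^ (ρ - (P + 1)) := by
      intro t ht
      have ht0 : (0:ℝ) < t := lt_trans hR0 ht.1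
      have htc : (0:ℝ) < t ^ (P + 1) := Real.rpow_pos_of_pos ht0 _
      have h1 : n t ≤ ε' * t ^ ρ := hkey t ht.1.le
      rw [Real.rpow_sub ht0, ← mul_div_assoc]
      exact div_le_div_of_nonneg_right h1 htc.le |>.trans_eq rfl
    have hIb : IntegrableOn (fun t => ε' * t ^ (ρ - (P + 1))) (Set.Ioc R r) := by
      refine Integrable.const_mul ?_ ε'
      exact (intervalIntegral.intervalIntegrable_rpow' (a := R) (b := r)
        (by linarith : (-1:ℝ) < ρ - (P+1))).1
    have h1 : ∫ t in Set.Ioc R r, n t / t ^ (P + 1) ≤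
        ∫ t in Set.Ioc R r, ε' * t ^ (ρ - (P + 1)) :=
      setIntegral_mono_on hIRr hIb measurableSet_Ioc hbd
    have h2 : ∫ t in Set.Ioc R r, ε' * t ^ (ρ - (P + 1)) ≤ ε' * (r ^ (ρ - P) / (ρ - P)) := by
      rw [integral_const_mul]
      refine mul_le_mul_of_nonneg_left ?_ hε'.le
      have heq : ∫ t in Set.Ioc R r, t ^ (ρ - (P + 1)) = ∫ t in R..r, t ^ (ρ - (P + 1)) := by
        rw [intervalIntegral.integral_of_le hr]
      rw [heq, integral_rpow (Or.inl (by linarith : (-1:ℝ) < ρ - (P + 1)))]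
      have hRpow : (0:ℝ) ≤ R ^ (ρ - (P + 1) + 1) := Real.rpow_nonneg hR0.le _
      rw [show ρ - (P + 1) + 1 = ρ - P by ring]
      have hRpow' : (0:ℝ) ≤ R ^ (ρ - P) := Real.rpow_nonneg hR0.le _
      rw [div_le_div_iff₀ (by linarith) (by linarith)]
      nlinarith
    have h3 : 0 ≤ ∫ t in Set.Ioc R r, n t / t ^ (P + 1) :=
      hnn _ _ measurableSet_Ioc (fun x hx => lt_trans hR0 hx.1)
    have hrpow : (0:ℝ) < r ^ (P - ρ) := Real.rpow_pos_of_pos hr0 _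
    have hIpos : 0 ≤ ∫ t in Set.Ioc (0:ℝ) r, n t / t ^ (P + 1) :=
      hnn _ _ measurableSet_Ioc (fun x hx => hx.1)
    rw [Real.norm_of_nonneg (mul_nonneg hrpow.le hIpos)]
    have h4 : r ^ (P - ρ) * ∫ t in Set.Ioc (0:ℝ) r, n t / t ^ (P + 1) ≤
        r ^ (P - ρ) * (C + ε' * (r ^ (ρ - P) / (ρ - P))) := by
      rw [hsplit]
      exact mul_le_mul_of_nonneg_left (by linarith) hrpow.le
    have h5 : r ^ (P - ρ) * (ε' * (r ^ (ρ - P) / (ρ - P))) = ε / 4 := by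
      have hone : r ^ (P - ρ) * r ^ (ρ - P) = 1 := by
        rw [← Real.rpow_add hr0]; norm_num
      rw [hε'def, show r ^ (P - ρ) * ((ρ - P) * ε / 4 * (r ^ (ρ - P) / (ρ - P))) =
        (r ^ (P - ρ) * r ^ (ρ - P)) * ((ρ - P) / (ρ - P)) * ε / 4 by ring, hone,
        div_self (by linarith : ρ - P ≠ 0)]
      ring
    have h6 : r ^ (P - ρ) * (C + ε' * (r ^ (ρ - P) / (ρ - P))) =
        r ^ (P - ρ) * C + r ^ (P - ρ) * (ε' * (r ^ (ρ - P) / (ρ - P))) := by ring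
    calc r ^ (P - ρ) * ∫ t in Set.Ioc (0:ℝ) r, n t / t ^ (P + 1)
        ≤ r ^ (P - ρ) * C + ε / 4 := by rw [h6, h5] at h4; exact h4
      _ < ε / 2 + ε / 4 := by linarith
      _ < ε := by linarith
  exact ⟨part1, part2, part3⟩
end

section
/- Let n : [0,∞) → [0,∞) be a nondecreasing function vanishing on some interval [0, t₀] with t₀ > 0, let ρ₁ > 0 be a non-integer real number, p = ⌊ρ₁⌋, and define β(r) = r^{p-ρ₁} ( ∫₀^r n(t)/t^{p+1} dt + r·∫_r^∞ n(t)/t^{p+2} dt ). If (ln r)·n(r)/r^{ρ₁} → 0 as r → ∞, then β(r)·ln r → 0 as r → ∞. -/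
open MeasureTheory Filter

lemma aux_meas {b : ℝ} (hb : 0 ≤ b) {g : ℝ → ℝ} (hg : Monotone g) :
    Measurable (fun t : ℝ => g t / t ^ b) :=
  hg.measurable.div
    (continuous_iff_continuousAt.2 fun x =>
      Real.continuousAt_rpow_const x b (Or.inr hb)).measurable

lemma aux_int1 {g : ℝ → ℝ} (hg : Monotone g) (hnn : ∀ t, 0 ≤ g t) {t₀ : ℝ} (ht₀ : 0 < t₀)
    (hvan : ∀ t ≤ t₀, g t = 0) {b : ℝ} (hb : 0 ≤ b) (r : ℝ) :
    IntegrableOn (fun t => g t / t ^ b) (Set.Ioc 0 r) := by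
  apply Measure.integrableOn_of_bounded (M := g (max r t₀) / t₀ ^ b) measure_Ioc_lt_top.ne
    (aux_meas hb hg).aestronglyMeasurable
  filter_upwards [ae_restrict_mem measurableSet_Ioc] with t ht
  rcases le_or_gt t t₀ with h | h
  · have h2 : (0:ℝ) < t₀ ^ b := Real.rpow_pos_of_pos ht₀ b
    simp only [hvan t h, zero_div, norm_zero]
    exact div_nonneg (hnn _) h2.le
  · have h1 : t₀ ^ b ≤ t ^ b := Real.rpow_le_rpow ht₀.le h.le hb
    have h2 : (0:ℝ) < t₀ ^ b := Real.rpow_pos_of_pos ht₀ b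
    rw [Real.norm_eq_abs, abs_of_nonneg (div_nonneg (hnn t) (Real.rpow_nonneg ht.1.le b))]
    exact div_le_div₀ (hnn _) (hg (le_max_of_le_left ht.2)) h2 h1

lemma aux_mid {f : ℝ → ℝ} {u v M c : ℝ} (h0 : 0 < u) (huv : u ≤ v) (hc : -1 < c) (hM : 0 ≤ M)
    (hint : IntegrableOn f (Set.Ioc u v)) (hbound : ∀ t ∈ Set.Ioc u v, f t ≤ M * t ^ c) :
    (∫ t in Set.Ioc u v, f t) ≤ M * v ^ (c + 1) / (c + 1) := by
  have hint2 : IntegrableOn (fun t => M * t ^ c) (Set.Ioc u v) :=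
    ((intervalIntegrable_iff_integrableOn_Ioc_of_le huv).1
      (intervalIntegral.intervalIntegrable_rpow' hc)).const_mul M
  have hc1 : (0:ℝ) < c + 1 := by linarith
  calc (∫ t in Set.Ioc u v, f t) ≤ ∫ t in Set.Ioc u v, M * t ^ c :=
        setIntegral_mono_on hint hint2 measurableSet_Ioc hbound
    _ = M * ∫ t in Set.Ioc u v, t ^ c := by rw [MeasureTheory.integral_const_mul]
    _ = M * ((v ^ (c+1) - u ^ (c+1)) / (c+1)) := by
        rw [← intervalIntegral.integral_of_le huv, integral_rpow (Or.inl hc)]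
    _ ≤ M * (v ^ (c+1) / (c+1)) := by
        have h1 : 0 ≤ u ^ (c+1) := Real.rpow_nonneg h0.le _
        gcongr
        linarith
    _ = M * v ^ (c+1) / (c+1) := (mul_div_assoc _ _ _).symm

lemma aux_tail {g : ℝ → ℝ} (hg : Monotone g) {b c M r : ℝ} (hb : 0 ≤ b)
    (hc : c < -1) (hr : 0 < r) (hnn : ∀ t ∈ Set.Ioi r, 0 ≤ g t / t ^ b)
    (hbound : ∀ t ∈ Set.Ioi r, g t / t ^ b ≤ M * t ^ c) :
    IntegrableOn (fun t => g t / t ^ b) (Set.Ioi r) ∧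
    (∫ t in Set.Ioi r, g t / t ^ b) ≤ M * (r ^ (c + 1) / (-(c+1))) := by
  have hint2 : IntegrableOn (fun t => M * t ^ c) (Set.Ioi r) :=
    (integrableOn_Ioi_rpow_of_lt hc hr).const_mul M
  have hint : IntegrableOn (fun t => g t / t ^ b) (Set.Ioi r) := by
    apply Integrable.mono' hint2 (aux_meas hb hg).aestronglyMeasurable.restrict
    filter_upwards [ae_restrict_mem measurableSet_Ioi] with t ht
    rw [Real.norm_eq_abs, abs_of_nonneg (hnn t ht)]
    exact hbound t ht
  refine ⟨hint, ?_⟩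
  calc (∫ t in Set.Ioi r, g t / t ^ b) ≤ ∫ t in Set.Ioi r, M * t ^ c :=
        setIntegral_mono_on hint hint2 measurableSet_Ioi hbound
    _ = M * ∫ t in Set.Ioi r, t ^ c := by rw [MeasureTheory.integral_const_mul]
    _ = M * (r ^ (c + 1) / (-(c+1))) := by
        rw [integral_Ioi_rpow_of_lt hc hr, div_neg, neg_div]

set_option maxHeartbeats 1000000

/-- Lemma 3 of the paper: if `n` is a nondecreasing nonnegative function vanishing near `0`,
`ρ₁ > 0` is non-integer, `p = ⌊ρ₁⌋`,
`β(r) = r^(p-ρ₁)(∫₀^r n(t)/t^(p+1) dt + r·∫_r^∞ n(t)/t^(p+2) dt)`, and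
`(ln r)·n(r)/r^ρ₁ → 0`, then `β(r)·ln r → 0` as `r → ∞`. -/
theorem stmt_5 (n : ℝ → ℝ) (hmono : MonotoneOn n (Set.Ici 0))
    (hnonneg : ∀ t, 0 ≤ t → 0 ≤ n t)
    (t₀ : ℝ) (ht₀ : 0 < t₀) (hvanish : ∀ t ∈ Set.Icc 0 t₀, n t = 0)
    (ρ₁ : ℝ) (hρ₁ : 0 < ρ₁) (hnotint : ∀ m : ℤ, ρ₁ ≠ (m : ℝ))
    (hlim : Tendsto (fun r => Real.log r * n r / r ^ ρ₁) atTop (nhds 0)) :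
    Tendsto (fun r =>
        (r ^ ((⌊ρ₁⌋₊ : ℝ) - ρ₁) *
          ((∫ t in Set.Ioc (0:ℝ) r, n t / t ^ ((⌊ρ₁⌋₊ : ℝ) + 1)) +
            r * ∫ t in Set.Ioi r, n t / t ^ ((⌊ρ₁⌋₊ : ℝ) + 2))) * Real.log r)
      atTop (nhds 0) := by
  set P : ℝ := (⌊ρ₁⌋₊ : ℝ) with hPdef
  have haP : 0 < ρ₁ - P := by
    have h1 : P ≤ ρ₁ := Nat.floor_le hρ₁.le
    have h2 : ρ₁ ≠ P := by
      have := hnotint (⌊ρ₁⌋₊ : ℤ)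
      rw [hPdef]
      push_cast at this ⊢
      exact this
    rcases h1.lt_or_eq with h | h
    · linarith
    · exact absurd h.symm h2
  have haP1 : ρ₁ - P < 1 := by
    have := Nat.lt_floor_add_one ρ₁
    rw [hPdef]; push_cast at this ⊢; linarith
  set a : ℝ := ρ₁ - P with hadef
  have hP0 : (0:ℝ) ≤ P := by rw [hPdef]; positivity
  have hP1nn : (0:ℝ) ≤ P + 1 := by linarith
  have hP2nn : (0:ℝ) ≤ P + 2 := by linarith
  -- extend n to a monotone function on all of ℝ
  set N : ℝ → ℝ := fun t => n (max t 0) with hNdef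
  have hNmono : Monotone N := fun x y hxy =>
    hmono (Set.mem_Ici.2 (le_max_right _ _)) (Set.mem_Ici.2 (le_max_right _ _))
      (max_le_max hxy le_rfl)
  have hNeq : ∀ t : ℝ, 0 ≤ t → N t = n t := fun t ht => by
    rw [hNdef]; simp [max_eq_left ht]
  have hNnn : ∀ t, 0 ≤ N t := fun t => hnonneg _ (le_max_right _ _)
  have hNvan : ∀ t, t ≤ t₀ → N t = 0 := fun t ht =>
    hvanish _ ⟨le_max_right _ _, max_le ht ht₀.le⟩
  -- the key tendsto statement for N
  have key : Tendsto (fun r =>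
      (r ^ (P - ρ₁) *
        ((∫ t in Set.Ioc (0:ℝ) r, N t / t ^ (P + 1)) +
          r * ∫ t in Set.Ioi r, N t / t ^ (P + 2))) * Real.log r)
      atTop (nhds 0) := by
    rw [NormedAddCommGroup.tendsto_nhds_zero]
    intro ε hε
    set ε' : ℝ := min (ε * a / 16) (ε * (1 - a) / 16) with hε'def
    have hε'pos : 0 < ε' := lt_min (by positivity) (by nlinarith)
    have hε'a : ε' ≤ ε * a / 16 := min_le_left _ _
    have hε'b : ε' ≤ ε * (1 - a) / 16 := min_le_right _ _
    obtain ⟨R₀, hR₀⟩ := Metric.tendsto_atTop.1 hlim ε' hε'pos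
    set R : ℝ := max R₀ (max (t₀ + 1) (Real.exp 1)) with hRdef
    have hexp1 : (1:ℝ) < Real.exp 1 := by
      have := Real.add_one_le_exp 1; linarith
    have hR1 : 1 < R := lt_of_lt_of_le hexp1 (le_max_of_le_right (le_max_right _ _))
    have hR0 : 0 < R := lt_trans one_pos hR1
    have hRlog : ∀ t, R ≤ t → 1 ≤ Real.log t := by
      intro t ht
      have h1 : Real.exp 1 ≤ t := le_trans (le_max_of_le_right (le_max_right _ _)) ht
      calc (1:ℝ) = Real.log (Real.exp 1) := (Real.log_exp 1).symm
        _ ≤ Real.log t := Real.log_le_log (Real.exp_pos 1) h1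
    have hkey : ∀ t, R ≤ t → Real.log t * N t ≤ ε' * t ^ ρ₁ := by
      intro t ht
      have htpos : 0 < t := lt_of_lt_of_le hR0 ht
      have h := hR₀ t (le_trans (le_max_left _ _) ht)
      rw [Real.dist_eq, sub_zero] at h
      have h2 : Real.log t * n t / t ^ ρ₁ ≤ ε' := (le_abs_self _).trans h.le
      rw [div_le_iff₀ (Real.rpow_pos_of_pos htpos ρ₁)] at h2
      rw [hNeq t htpos.le]
      linarith [h2]
    have hkey2 : ∀ t, R ≤ t → N t ≤ ε' * t ^ ρ₁ := fun t ht =>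
      le_trans (le_mul_of_one_le_left (hNnn t) (hRlog t ht)) (hkey t ht)
    set C : ℝ := ∫ t in Set.Ioc (0:ℝ) R, N t / t ^ (P + 1) with hCdef
    have hC0 : 0 ≤ C := setIntegral_nonneg measurableSet_Ioc fun t ht =>
      div_nonneg (hNnn t) (Real.rpow_nonneg ht.1.le _)
    -- two auxiliary limits
    have hT : ∀ b : ℝ, 0 < b →
        Tendsto (fun r : ℝ => r ^ (-b) * Real.log r) atTop (nhds 0) := by
      intro b hb
      refine (isLittleO_log_rpow_atTop hb).tendsto_div_nhds_zero.congr' ?_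
      filter_upwards [eventually_gt_atTop (0:ℝ)] with r hr
      rw [Real.rpow_neg hr.le, div_eq_mul_inv, mul_comm]
    have T1 : Tendsto (fun r : ℝ => C * (r ^ (-a) * Real.log r)) atTop (nhds 0) := by
      simpa using (hT a haP).const_mul C
    have T2 : Tendsto (fun r : ℝ => (ε'/a) * (r ^ (-(a/2)) * Real.log r)) atTop (nhds 0) := by
      simpa using (hT (a/2) (by linarith)).const_mul (ε'/a)
    have hRR : R ≤ R ^ (2:ℝ) := by
      calc R = R ^ (1:ℝ) := (Real.rpow_one R).symm
        _ ≤ R ^ (2:ℝ) := Real.rpow_le_rpow_of_exponent_le hR1.le (by norm_num)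
    filter_upwards [T1.eventually_lt_const (show (0:ℝ) < ε/4 by linarith),
      T2.eventually_lt_const (show (0:ℝ) < ε/4 by linarith),
      eventually_ge_atTop (R ^ (2:ℝ))] with r hr1 hr2 hrR
    have hr_gt1 : 1 < r := lt_of_lt_of_le (lt_of_lt_of_le hR1 hRR) hrR
    have hr0 : (0:ℝ) < r := lt_trans one_pos hr_gt1
    have hL : 0 < Real.log r := Real.log_pos hr_gt1
    have hRr : R ≤ r := hRR.trans hrR
    set s : ℝ := r ^ ((1:ℝ)/2) with hsdef
    have hs0 : 0 < s := Real.rpow_pos_of_pos hr0 _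
    have hRs : R ≤ s := by
      calc R = (R ^ (2:ℝ)) ^ ((1:ℝ)/2) := by
            rw [← Real.rpow_mul hR0.le]; norm_num
        _ ≤ s := Real.rpow_le_rpow (Real.rpow_nonneg hR0.le _) hrR (by norm_num)
    have hsr : s ≤ r := by
      calc s ≤ r ^ (1:ℝ) := Real.rpow_le_rpow_of_exponent_le hr_gt1.le (by norm_num)
        _ = r := Real.rpow_one r
    have hlogs : Real.log s = Real.log r / 2 := by
      rw [hsdef, Real.log_rpow hr0]; ring
    -- integrability pieces
    have intfull : IntegrableOn (fun t => N t / t ^ (P+1)) (Set.Ioc 0 r) :=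
      aux_int1 hNmono hNnn ht₀ hNvan hP1nn r
    have intC' : IntegrableOn (fun t => N t / t ^ (P+1)) (Set.Ioc 0 R) :=
      intfull.mono_set (Set.Ioc_subset_Ioc_right hRr)
    have intRr : IntegrableOn (fun t => N t / t ^ (P+1)) (Set.Ioc R r) :=
      intfull.mono_set (Set.Ioc_subset_Ioc hR0.le le_rfl)
    have intJ1 : IntegrableOn (fun t => N t / t ^ (P+1)) (Set.Ioc R s) :=
      intfull.mono_set (Set.Ioc_subset_Ioc hR0.le hsr)
    have intJ2 : IntegrableOn (fun t => N t / t ^ (P+1)) (Set.Ioc s r) :=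
      intfull.mono_set (Set.Ioc_subset_Ioc hs0.le le_rfl)
    -- split I1
    have hsplit : (∫ t in Set.Ioc (0:ℝ) r, N t / t ^ (P+1)) =
        C + ((∫ t in Set.Ioc R s, N t / t ^ (P+1)) +
          (∫ t in Set.Ioc s r, N t / t ^ (P+1))) := by
      rw [← Set.Ioc_union_Ioc_eq_Ioc hR0.le hRr,
        setIntegral_union (Set.Ioc_disjoint_Ioc_of_le le_rfl) measurableSet_Ioc intC' intRr,
        ← Set.Ioc_union_Ioc_eq_Ioc hRs hsr,
        setIntegral_union (Set.Ioc_disjoint_Ioc_of_le le_rfl) measurableSet_Ioc intJ1 intJ2]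
    -- bound J1
    have hbJ1 : (∫ t in Set.Ioc R s, N t / t ^ (P+1)) ≤ ε' * s ^ a / a := by
      have hb : ∀ t ∈ Set.Ioc R s, N t / t ^ (P+1) ≤ ε' * t ^ (ρ₁ - (P+1)) := by
        intro t ht
        have htpos : 0 < t := lt_trans hR0 ht.1
        calc N t / t ^ (P+1) ≤ (ε' * t ^ ρ₁) / t ^ (P+1) :=
              (div_le_div_iff_of_pos_right (Real.rpow_pos_of_pos htpos _)).2 (hkey2 t ht.1.le)
          _ = ε' * t ^ (ρ₁ - (P+1)) := by
              rw [mul_div_assoc, ← Real.rpow_sub htpos]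
      have h := aux_mid hR0 hRs (show (-1:ℝ) < ρ₁ - (P+1) by linarith) hε'pos.le intJ1 hb
      have he : ρ₁ - (P+1) + 1 = a := by rw [hadef]; ring
      rwa [he] at h
    -- bound J2
    have hbJ2 : (∫ t in Set.Ioc s r, N t / t ^ (P+1)) ≤
        (2*ε'/Real.log r) * r ^ a / a := by
      have hb : ∀ t ∈ Set.Ioc s r, N t / t ^ (P+1) ≤
          (2*ε'/Real.log r) * t ^ (ρ₁ - (P+1)) := by
        intro t ht
        have htpos : 0 < t := lt_trans hs0 ht.1
        have htR : R ≤ t := hRs.trans ht.1.le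
        have hlt : Real.log r / 2 ≤ Real.log t := by
          rw [← hlogs]; exact Real.log_le_log hs0 ht.1.le
        have h1 : (Real.log r / 2) * N t ≤ ε' * t ^ ρ₁ :=
          le_trans (mul_le_mul_of_nonneg_right hlt (hNnn t)) (hkey t htR)
        have h2 : N t ≤ (2*ε'/Real.log r) * t ^ ρ₁ := by
          rw [div_mul_eq_mul_div, le_div_iff₀ hL]
          linarith [h1]
        calc N t / t ^ (P+1) ≤ ((2*ε'/Real.log r) * t ^ ρ₁) / t ^ (P+1) :=
              (div_le_div_iff_of_pos_right (Real.rpow_pos_of_pos htpos _)).2 h2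
          _ = (2*ε'/Real.log r) * t ^ (ρ₁ - (P+1)) := by
              rw [mul_div_assoc, ← Real.rpow_sub htpos]
      have h := aux_mid hs0 hsr (show (-1:ℝ) < ρ₁ - (P+1) by linarith)
        (by positivity) intJ2 hb
      have he : ρ₁ - (P+1) + 1 = a := by rw [hadef]; ring
      rwa [he] at h
    -- tail bound
    have hbtail : ∀ t ∈ Set.Ioi r, N t / t ^ (P+2) ≤
        (ε'/Real.log r) * t ^ (ρ₁ - (P+2)) := by
      intro t ht
      have htpos : 0 < t := lt_trans hr0 ht
      have htR : R ≤ t := hRr.trans ht.le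
      have hlt : Real.log r ≤ Real.log t := Real.log_le_log hr0 ht.le
      have h1 : Real.log r * N t ≤ ε' * t ^ ρ₁ :=
        le_trans (mul_le_mul_of_nonneg_right hlt (hNnn t)) (hkey t htR)
      have h2 : N t ≤ (ε'/Real.log r) * t ^ ρ₁ := by
        rw [div_mul_eq_mul_div, le_div_iff₀ hL]
        linarith [h1]
      calc N t / t ^ (P+2) ≤ ((ε'/Real.log r) * t ^ ρ₁) / t ^ (P+2) :=
            (div_le_div_iff_of_pos_right (Real.rpow_pos_of_pos htpos _)).2 h2
        _ = (ε'/Real.log r) * t ^ (ρ₁ - (P+2)) := by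
            rw [mul_div_assoc, ← Real.rpow_sub htpos]
    have htail := aux_tail hNmono (b := P + 2) (c := ρ₁ - (P+2)) (M := ε'/Real.log r)
      (r := r) hP2nn (by linarith) hr0
      (fun t ht => div_nonneg (hNnn t) (Real.rpow_nonneg (le_trans hr0.le (le_of_lt ht)) _))
      hbtail
    obtain ⟨intI2, hbI2⟩ := htail
    have heI2 : ρ₁ - (P+2) + 1 = a - 1 := by rw [hadef]; ring
    rw [heI2] at hbI2
    have heI2' : -(a - 1) = 1 - a := by ring
    rw [heI2'] at hbI2
    -- nonnegativity of the integrals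
    have hI1nn : 0 ≤ ∫ t in Set.Ioc (0:ℝ) r, N t / t ^ (P+1) :=
      setIntegral_nonneg measurableSet_Ioc fun t ht =>
        div_nonneg (hNnn t) (Real.rpow_nonneg ht.1.le _)
    have hI2nn : 0 ≤ ∫ t in Set.Ioi r, N t / t ^ (P+2) :=
      setIntegral_nonneg measurableSet_Ioi fun t ht =>
        div_nonneg (hNnn t) (Real.rpow_nonneg (le_trans hr0.le (le_of_lt ht)) _)
    have hJ1nn : 0 ≤ ∫ t in Set.Ioc R s, N t / t ^ (P+1) :=
      setIntegral_nonneg measurableSet_Ioc fun t ht =>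
        div_nonneg (hNnn t) (Real.rpow_nonneg (le_trans hR0.le ht.1.le) _)
    have hJ2nn : 0 ≤ ∫ t in Set.Ioc s r, N t / t ^ (P+1) :=
      setIntegral_nonneg measurableSet_Ioc fun t ht =>
        div_nonneg (hNnn t) (Real.rpow_nonneg (le_trans hs0.le ht.1.le) _)
    -- algebraic identities
    have hexp : P - ρ₁ = -a := by rw [hadef]; ring
    have hxnn : (0:ℝ) < r ^ (-a) := Real.rpow_pos_of_pos hr0 _
    have hxa : r ^ (-a) * r ^ a = 1 := by
      rw [← Real.rpow_add hr0]; simp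
    have hs_a : s ^ a = r ^ (a/2) := by
      rw [hsdef, ← Real.rpow_mul hr0.le]; congr 1; ring
    have hxs : r ^ (-a) * r ^ (a/2) = r ^ (-(a/2)) := by
      rw [← Real.rpow_add hr0]; congr 1; ring
    have hra : r * r ^ (a-1) = r ^ a := by
      rw [mul_comm, ← Real.rpow_add_one hr0.ne' (a-1)]; congr 1; ring
    -- nonnegativity of the whole expression
    have hfnn : 0 ≤ (r ^ (P - ρ₁) *
        ((∫ t in Set.Ioc (0:ℝ) r, N t / t ^ (P + 1)) +
          r * ∫ t in Set.Ioi r, N t / t ^ (P + 2))) * Real.log r :=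
      mul_nonneg (mul_nonneg (Real.rpow_nonneg hr0.le _)
        (add_nonneg hI1nn (mul_nonneg hr0.le hI2nn))) hL.le
    rw [Real.norm_eq_abs, abs_of_nonneg hfnn]
    -- the main estimate
    have step : (r ^ (P - ρ₁) *
        ((∫ t in Set.Ioc (0:ℝ) r, N t / t ^ (P + 1)) +
          r * ∫ t in Set.Ioi r, N t / t ^ (P + 2))) * Real.log r ≤
        C * (r ^ (-a) * Real.log r) + (ε'/a) * (r ^ (-(a/2)) * Real.log r)
          + 2*ε'/a + ε'/(1-a) := by
      rw [hexp, hsplit]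
      have e0 : (r ^ (-a) * (C + ((∫ t in Set.Ioc R s, N t / t ^ (P+1)) +
          (∫ t in Set.Ioc s r, N t / t ^ (P+1))) +
          r * ∫ t in Set.Ioi r, N t / t ^ (P+2))) * Real.log r =
          C * (r ^ (-a) * Real.log r)
          + (r ^ (-a) * Real.log r) * (∫ t in Set.Ioc R s, N t / t ^ (P+1))
          + (r ^ (-a) * Real.log r) * (∫ t in Set.Ioc s r, N t / t ^ (P+1))
          + (r ^ (-a) * Real.log r) * (r * ∫ t in Set.Ioi r, N t / t ^ (P+2)) := by
        ring
      rw [e0]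
      have hxLnn : 0 ≤ r ^ (-a) * Real.log r := mul_nonneg hxnn.le hL.le
      have b1 : (r ^ (-a) * Real.log r) * (∫ t in Set.Ioc R s, N t / t ^ (P+1)) ≤
          (ε'/a) * (r ^ (-(a/2)) * Real.log r) := by
        calc (r ^ (-a) * Real.log r) * (∫ t in Set.Ioc R s, N t / t ^ (P+1)) ≤
            (r ^ (-a) * Real.log r) * (ε' * s ^ a / a) :=
              mul_le_mul_of_nonneg_left hbJ1 hxLnn
          _ = (ε'/a) * (r ^ (-(a/2)) * Real.log r) := by
              rw [hs_a, show r ^ (-a) * Real.log r * (ε' * r ^ (a/2) / a) =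
                (r ^ (-a) * r ^ (a/2)) * (Real.log r * ε' / a) by ring, hxs]
              ring
      have b2 : (r ^ (-a) * Real.log r) * (∫ t in Set.Ioc s r, N t / t ^ (P+1)) ≤
          2*ε'/a := by
        calc (r ^ (-a) * Real.log r) * (∫ t in Set.Ioc s r, N t / t ^ (P+1)) ≤
            (r ^ (-a) * Real.log r) * ((2*ε'/Real.log r) * r ^ a / a) :=
              mul_le_mul_of_nonneg_left hbJ2 hxLnn
          _ = (r ^ (-a) * r ^ a) * ((Real.log r / Real.log r) * (2*ε'/a)) := by ring
          _ = 2*ε'/a := by rw [hxa, div_self hL.ne', one_mul, one_mul]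
      have b3 : (r ^ (-a) * Real.log r) * (r * ∫ t in Set.Ioi r, N t / t ^ (P+2)) ≤
          ε'/(1-a) := by
        calc (r ^ (-a) * Real.log r) * (r * ∫ t in Set.Ioi r, N t / t ^ (P+2)) ≤
            (r ^ (-a) * Real.log r) * (r * ((ε'/Real.log r) * (r ^ (a-1) / (1-a)))) := by
              apply mul_le_mul_of_nonneg_left _ hxLnn
              exact mul_le_mul_of_nonneg_left hbI2 hr0.le
          _ = (r ^ (-a) * (r * r ^ (a-1))) * ((Real.log r / Real.log r) * (ε'/(1-a))) := by
              ring
          _ = ε'/(1-a) := by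
              rw [hra, hxa, div_self hL.ne', one_mul, one_mul]
      linarith [b1, b2, b3]
    have hfin1 : 2*ε'/a ≤ ε/8 := by
      rw [div_le_iff₀ haP]
      linarith [hε'a]
    have hfin2 : ε'/(1-a) ≤ ε/16 := by
      rw [div_le_iff₀ (by linarith : (0:ℝ) < 1 - a)]
      linarith [hε'b]
    calc (r ^ (P - ρ₁) *
        ((∫ t in Set.Ioc (0:ℝ) r, N t / t ^ (P + 1)) +
          r * ∫ t in Set.Ioi r, N t / t ^ (P + 2))) * Real.log r ≤
        C * (r ^ (-a) * Real.log r) + (ε'/a) * (r ^ (-(a/2)) * Real.log r)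
          + 2*ε'/a + ε'/(1-a) := step
      _ < ε := by linarith
  -- transfer from N back to n
  refine key.congr' ?_
  filter_upwards [eventually_ge_atTop (0:ℝ)] with r hr
  congr 1
  congr 1
  congr 1
  · exact setIntegral_congr_fun measurableSet_Ioc fun t ht => by rw [hNeq t ht.1.le]
  · congr 1
    exact setIntegral_congr_fun measurableSet_Ioi fun t ht =>
      by rw [hNeq t (le_trans hr (le_of_lt ht))]
end

section
/- For every ρ > 0 there exists a nondecreasing sequence (a_k)_{k≥1} of positive real numbers tending to infinity, with counting function n(r) = #{k : a_k < r}, such that: (i) ∑_{k=1}^∞ 1/a_k^ρ = ∞; (ii) ∑_{k=1}^∞ 1/a_k^{ρ+ε} < ∞ for every ε > 0; (iii) n(r)/r^ρ → 0 as r → ∞ (the density is zero); and (iv) (ln r)·n(r)/r^ρ → 0 as r → ∞. -/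
open MeasureTheory Filter

noncomputable def exF (x : ℝ) : ℝ := x * Real.log x * Real.log (Real.log x)

lemma ex_one_lt_log4 : 1 < Real.log 4 := by
  have h4 : (4:ℝ) = 2^2 := by norm_num
  rw [h4, Real.log_pow]
  have := Real.log_two_gt_d9
  norm_num
  linarith

lemma exF_facts {x : ℝ} (hx : 4 ≤ x) :
    1 < Real.log x ∧ 0 < Real.log (Real.log x) ∧ 0 < exF x := by
  have h1 : 1 < Real.log x := lt_of_lt_of_le ex_one_lt_log4 (Real.log_le_log (by norm_num) hx)
  have h2 : 0 < Real.log (Real.log x) := Real.log_pos h1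
  exact ⟨h1, h2, by
    have : (0:ℝ) < x := by linarith
    unfold exF; positivity⟩

lemma exF_mono {x y : ℝ} (hx : 4 ≤ x) (hxy : x ≤ y) : exF x ≤ exF y := by
  obtain ⟨h1, h2, _⟩ := exF_facts hx
  have hy : 4 ≤ y := le_trans hx hxy
  have hlog : Real.log x ≤ Real.log y := Real.log_le_log (by linarith) hxy
  have hll : Real.log (Real.log x) ≤ Real.log (Real.log y) :=
    Real.log_le_log (by linarith) hlog
  unfold exF
  have hxy' : x * Real.log x ≤ y * Real.log y := by
    have hx0 : (0:ℝ) ≤ x := by linarith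
    gcongr
    all_goals linarith

  exact mul_le_mul hxy' hll h2.le (by nlinarith [Real.log_nonneg (show (1:ℝ) ≤ y by linarith)])

lemma xlogx_mono {x y : ℝ} (hx : 2 ≤ x) (hxy : x ≤ y) : x * Real.log x ≤ y * Real.log y := by
  have h1 : 0 ≤ Real.log x := Real.log_nonneg (by linarith)
  have hlog : Real.log x ≤ Real.log y := Real.log_le_log (by linarith) hxy
  have hx0 : (0:ℝ) ≤ x := by linarith
  gcongr
  linarith

noncomputable def exf2 (n : ℕ) : ℝ := 1 / (max (n:ℝ) 2 * Real.log (max (n:ℝ) 2))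

lemma exf2_pos (n : ℕ) : 0 < exf2 n := by
  have h2 : (2:ℝ) ≤ max (n:ℝ) 2 := le_max_right _ _
  have : 0 < Real.log (max (n:ℝ) 2) := Real.log_pos (by linarith)
  unfold exf2; positivity

lemma exf2_anti : ∀ ⦃m n : ℕ⦄, 0 < m → m ≤ n → exf2 n ≤ exf2 m := by
  intro m n _ hmn
  have h2m : (2:ℝ) ≤ max (m:ℝ) 2 := le_max_right _ _
  have hle : max (m:ℝ) 2 ≤ max (n:ℝ) 2 :=
    max_le_max (by exact_mod_cast Nat.cast_le.2 hmn) le_rfl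
  have h := xlogx_mono h2m hle
  have hpos : 0 < max (m:ℝ) 2 * Real.log (max (m:ℝ) 2) := by
    have : 0 < Real.log (max (m:ℝ) 2) := Real.log_pos (by linarith)
    positivity
  exact one_div_le_one_div_of_le hpos h

lemma not_summable_exf2 : ¬ Summable exf2 := by
  intro h
  rw [← summable_condensed_iff_of_nonneg (fun n => (exf2_pos n).le) exf2_anti] at h
  have h' := (summable_nat_add_iff 1).2 h
  have heq : ∀ k : ℕ, (2:ℝ) ^ (k+1) * exf2 (2 ^ (k+1)) = (Real.log 2)⁻¹ * (1 / ((k:ℝ)+1)) := by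
    intro k
    have h2k : (2:ℝ) ≤ ((2:ℕ) ^ (k+1) : ℕ) := by
      have := Nat.one_lt_two_pow (n := k+1) (by omega)
      exact_mod_cast this
    have hmax : max (((2:ℕ) ^ (k+1) : ℕ) : ℝ) 2 = (2:ℝ) ^ (k+1) := by
      rw [max_eq_left h2k]; push_cast; ring
    unfold exf2
    rw [hmax, Real.log_pow]
    have hl2 : 0 < Real.log 2 := Real.log_pos (by norm_num)
    have hp : (0:ℝ) < 2 ^ (k+1) := by positivity
    field_simp
    push_cast; ring
  rw [show (fun k : ℕ => (2:ℝ) ^ (k+1) * exf2 (2 ^ (k+1)))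
      = fun k : ℕ => (Real.log 2)⁻¹ * (1 / ((k:ℝ)+1)) from funext heq] at h'
  have h'' := h'.mul_left (Real.log 2)
  have hl2 : Real.log 2 ≠ 0 := ne_of_gt (Real.log_pos (by norm_num))
  have h3 : Summable (fun k : ℕ => 1 / ((k:ℝ)+1)) := by
    refine h''.congr fun k => ?_
    field_simp
  have h4 : Summable (fun k : ℕ => 1 / ((k:ℝ))) :=
    (summable_nat_add_iff (f := fun k : ℕ => 1 / (k:ℝ)) 1).1
      (h3.congr fun k => by push_cast; ring)
  exact Real.not_summable_one_div_natCast h4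

noncomputable def exf3 (n : ℕ) : ℝ := 1 / exF (max (n:ℝ) 4)

lemma exf3_pos (n : ℕ) : 0 < exf3 n := by
  have := (exF_facts (le_max_right (n:ℝ) 4)).2.2
  unfold exf3; positivity

lemma exf3_anti : ∀ ⦃m n : ℕ⦄, 0 < m → m ≤ n → exf3 n ≤ exf3 m := by
  intro m n _ hmn
  have h4m : (4:ℝ) ≤ max (m:ℝ) 4 := le_max_right _ _
  have hle : max (m:ℝ) 4 ≤ max (n:ℝ) 4 :=
    max_le_max (by exact_mod_cast Nat.cast_le.2 hmn) le_rfl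
  exact one_div_le_one_div_of_le (exF_facts h4m).2.2 (exF_mono h4m hle)

lemma not_summable_exf3 : ¬ Summable exf3 := by
  intro h
  rw [← summable_condensed_iff_of_nonneg (fun n => (exf3_pos n).le) exf3_anti] at h
  have h' := (summable_nat_add_iff 2).2 h
  -- show exf2 (k+2) ≤ log 2 * (condensed term at k+2)
  have hl2 : 0 < Real.log 2 := Real.log_pos (by norm_num)
  have key : ∀ k : ℕ, exf2 (k+2) ≤ Real.log 2 * ((2:ℝ) ^ (k+2) * exf3 (2 ^ (k+2))) := by
    intro k
    have h2k : (4:ℝ) ≤ ((2:ℕ) ^ (k+2) : ℕ) := by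
      have : (2:ℕ)^2 ≤ 2^(k+2) := Nat.pow_le_pow_right (by norm_num) (by omega)
      exact_mod_cast this
    have hmax : max (((2:ℕ) ^ (k+2) : ℕ) : ℝ) 4 = (2:ℝ) ^ (k+2) := by
      rw [max_eq_left h2k]; push_cast; ring
    have hk2 : (2:ℝ) ≤ ((k:ℝ)+2) := by
      have : (0:ℝ) ≤ (k:ℝ) := Nat.cast_nonneg _
      linarith
    have hmax2 : max ((k:ℝ)+2) 2 = (k:ℝ)+2 := max_eq_left hk2
    -- compute condensed term
    have hp : (0:ℝ) < 2 ^ (k+2) := by positivity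
    have hlogpow : Real.log ((2:ℝ) ^ (k+2)) = ((k:ℝ)+2) * Real.log 2 := by
      rw [Real.log_pow]; push_cast; ring
    have hllpos : 0 < Real.log (((k:ℝ)+2) * Real.log 2) := by
      apply Real.log_pos
      nlinarith [Real.log_two_gt_d9]
    have hlle : Real.log (((k:ℝ)+2) * Real.log 2) ≤ Real.log ((k:ℝ)+2) := by
      apply Real.log_le_log (by positivity)
      nlinarith [Real.log_two_lt_d9]
    have hcond : (2:ℝ) ^ (k+2) * exf3 (2 ^ (k+2))
        = 1 / (((k:ℝ)+2) * Real.log 2 * Real.log (((k:ℝ)+2) * Real.log 2)) := by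
      unfold exf3 exF
      rw [hmax, hlogpow, mul_one_div,
        show (2:ℝ)^(k+2) * (((k:ℝ)+2) * Real.log 2) * Real.log (((k:ℝ)+2) * Real.log 2)
          = (2:ℝ)^(k+2) * ((((k:ℝ)+2) * Real.log 2) * Real.log (((k:ℝ)+2) * Real.log 2))
          from by ring]
      rw [div_eq_div_iff (by positivity) (by positivity)]
      ring
    rw [hcond]
    unfold exf2
    push_cast
    rw [hmax2]
    have hrhs : Real.log 2 * (1 / (((k:ℝ)+2) * Real.log 2 * Real.log (((k:ℝ)+2) * Real.log 2)))
        = 1 / (((k:ℝ)+2) * Real.log (((k:ℝ)+2) * Real.log 2)) := by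
      field_simp
    rw [hrhs]
    apply one_div_le_one_div_of_le (by positivity)
    have hlog2pos : 0 < Real.log ((k:ℝ)+2) := Real.log_pos (by linarith)
    nlinarith
  have h2 := (h'.mul_left (Real.log 2))
  have h3 : Summable (fun k : ℕ => exf2 (k+2)) :=
    Summable.of_nonneg_of_le (fun k => (exf2_pos _).le) key h2
  exact not_summable_exf2 ((summable_nat_add_iff 2).1 h3)

noncomputable def exC (k : ℕ) : ℝ := exF ((k:ℝ)+4)

lemma exC4 (k : ℕ) : (4:ℝ) ≤ (k:ℝ)+4 := by
  have : (0:ℝ) ≤ (k:ℝ) := Nat.cast_nonneg _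
  linarith

lemma exC_pos (k : ℕ) : 0 < exC k := (exF_facts (exC4 k)).2.2

lemma not_summable_inv_exC : ¬ Summable (fun k => 1 / exC k) := by
  intro h
  apply not_summable_exf3
  have heq : ∀ k : ℕ, exf3 (k+4) = 1 / exC k := by
    intro k
    unfold exf3 exC
    congr 1
    rw [max_eq_left (by push_cast; exact exC4 k)]
    push_cast; ring
  exact (summable_nat_add_iff 4).1 (h.congr fun k => (heq k).symm)

lemma summable_inv_exC_rpow {δ : ℝ} (hδ : 0 < δ) :
    Summable (fun k => 1 / exC k ^ (1+δ)) := by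
  set c : ℝ := Real.log 4 * Real.log (Real.log 4) with hc
  have hc0 : 0 < c := by
    have h1 := ex_one_lt_log4
    have h2 : 0 < Real.log (Real.log 4) := Real.log_pos h1
    positivity
  have hbound : ∀ k : ℕ, exC k ≥ c * ((k:ℝ)+4) := by
    intro k
    have h4 := exC4 k
    have h1 : Real.log 4 ≤ Real.log ((k:ℝ)+4) := Real.log_le_log (by norm_num) h4
    have h2 : Real.log (Real.log 4) ≤ Real.log (Real.log ((k:ℝ)+4)) :=
      Real.log_le_log (by linarith [ex_one_lt_log4]) h1
    have h3 : 0 < Real.log (Real.log 4) := Real.log_pos ex_one_lt_log4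
    unfold exC exF
    have hL0 : (0:ℝ) ≤ Real.log ((k:ℝ)+4) := le_trans (by linarith [ex_one_lt_log4]) h1
    have hLM : c ≤ Real.log ((k:ℝ)+4) * Real.log (Real.log ((k:ℝ)+4)) :=
      mul_le_mul h1 h2 h3.le hL0
    nlinarith [hLM, h4]
  have hsum : Summable (fun k : ℕ => 1 / ((k:ℝ)+4) ^ (1+δ)) := by
    have h0 : Summable (fun n : ℕ => 1 / ((n:ℝ)) ^ (1+δ)) :=
      Real.summable_one_div_nat_rpow.2 (by linarith)
    exact ((summable_nat_add_iff 4).2 h0).congr fun k => by push_cast; ring_nf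
  refine Summable.of_nonneg_of_le (fun k => by have := exC_pos k; positivity)
    (fun k => ?_) (hsum.mul_left (1 / c ^ (1+δ)))
  have hk4 : (0:ℝ) < (k:ℝ)+4 := by linarith [exC4 k]
  have h1 : (c * ((k:ℝ)+4)) ^ (1+δ) ≤ exC k ^ (1+δ) :=
    Real.rpow_le_rpow (by positivity) (hbound k) (by linarith)
  rw [Real.mul_rpow hc0.le hk4.le] at h1
  calc 1 / exC k ^ (1+δ) ≤ 1 / (c ^ (1+δ) * ((k:ℝ)+4) ^ (1+δ)) :=
        one_div_le_one_div_of_le (by positivity) h1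
    _ = (1 / c ^ (1+δ)) * (1 / ((k:ℝ)+4) ^ (1+δ)) := (one_div_mul_one_div _ _).symm

lemma ex_count_le {a : ℕ → ℝ} (ha : Monotone a) {r : ℝ} {N : ℕ} (h : r ≤ a N) :
    Nat.card {k : ℕ | a k < r} ≤ N := by
  have hsub : {k : ℕ | a k < r} ⊆ Set.Iio N := by
    intro k hk
    simp only [Set.mem_setOf_eq] at hk
    by_contra h'
    simp only [Set.mem_Iio, not_lt] at h'
    exact absurd (lt_of_le_of_lt (h.trans (ha h')) hk) (lt_irrefl _)
  calc Nat.card {k : ℕ | a k < r} ≤ Nat.card (Set.Iio N) := by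
        rw [Nat.card_coe_set_eq, Nat.card_coe_set_eq]
        exact Set.ncard_le_ncard hsub (Set.finite_Iio N)
    _ = N := by simp [Nat.card_coe_set_eq]

open Real in
lemma ex_key : ∀ᶠ s : ℝ in atTop,
    0 < Real.log (Real.log s) ∧
    s ≤ exC ⌈3 * s / (Real.log s * Real.log (Real.log s))⌉₊ := by
  have e1 : ∀ᶠ s : ℝ in atTop, (16:ℝ) ≤ s := eventually_ge_atTop 16
  have e2 : ∀ᶠ s : ℝ in atTop, Real.log s ≤ s ^ (1/4 : ℝ) := by
    have h := (isLittleO_log_rpow_atTop (show (0:ℝ) < 1/4 by norm_num)).bound one_pos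
    filter_upwards [h, eventually_ge_atTop (1:ℝ)] with s hs h1
    have h2 : (0:ℝ) < s := by linarith
    rw [Real.norm_eq_abs, Real.norm_eq_abs, abs_of_nonneg (Real.log_nonneg h1),
      abs_of_nonneg (Real.rpow_nonneg h2.le _), one_mul] at hs
    exact hs
  have e3 : ∀ᶠ s : ℝ in atTop, (3:ℝ) ≤ Real.log (Real.log s) :=
    (Real.tendsto_log_atTop.comp Real.tendsto_log_atTop).eventually_ge_atTop 3
  filter_upwards [e1, e2, e3] with s h16 hle4 hm3
  set ℓ := Real.log s with hℓ
  set m := Real.log ℓ with hm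
  have hs0 : (0:ℝ) < s := by linarith
  have hℓ1 : (1:ℝ) < ℓ := by
    have h1 : Real.log 16 ≤ ℓ := Real.log_le_log (by norm_num) h16
    have h2 : Real.log 16 = 4 * Real.log 2 := by
      rw [show (16:ℝ) = 2 ^ (4:ℕ) by norm_num, Real.log_pow]
      push_cast; ring
    have := Real.log_two_gt_d9
    linarith
  have hℓ0 : (0:ℝ) < ℓ := by linarith
  have hm0 : (0:ℝ) < m := by linarith
  refine ⟨hm0, ?_⟩
  have hmℓ : m ≤ ℓ := by
    calc m = Real.log ℓ := hm
      _ ≤ ℓ - 1 := Real.log_le_sub_one_of_pos hℓ0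
      _ ≤ ℓ := by linarith
  -- √s bounds
  have hhalf : s ^ (1/2 : ℝ) = s ^ (1/4 : ℝ) * s ^ (1/4 : ℝ) := by
    rw [← Real.rpow_add hs0]; norm_num
  have hsqrt16 : (4:ℝ) ≤ s ^ (1/2 : ℝ) := by
    have : (16:ℝ) ^ (1/2 : ℝ) ≤ s ^ (1/2 : ℝ) :=
      Real.rpow_le_rpow (by norm_num) h16 (by norm_num)
    have h164 : (16:ℝ) ^ (1/2 : ℝ) = 4 := by
      rw [show (16:ℝ) = 4 ^ (2:ℕ) by norm_num, ← Real.rpow_natCast 4 2,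
        ← Real.rpow_mul (by norm_num)]
      norm_num
    linarith
  have hℓm : ℓ * m ≤ s ^ (1/2 : ℝ) := by
    calc ℓ * m ≤ ℓ * ℓ := by nlinarith
      _ ≤ s ^ (1/4:ℝ) * s ^ (1/4:ℝ) := by nlinarith [Real.rpow_nonneg hs0.le (1/4:ℝ)]
      _ = s ^ (1/2:ℝ) := hhalf.symm
  set B := 3 * s / (ℓ * m) with hB
  have hℓm0 : 0 < ℓ * m := by positivity
  have hB0 : 0 < B := by positivity
  have hBbig : 3 * s ^ (1/2:ℝ) ≤ B := by
    rw [hB, le_div_iff₀ hℓm0]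
    have h1 : s ^ (1/2:ℝ) * (ℓ * m) ≤ s ^ (1/2:ℝ) * s ^ (1/2:ℝ) := by
      apply mul_le_mul_of_nonneg_left hℓm (Real.rpow_nonneg hs0.le _)
    have h2 : s ^ (1/2:ℝ) * s ^ (1/2:ℝ) = s := by
      rw [← Real.rpow_add hs0]; norm_num
    nlinarith
  have hB4 : (4:ℝ) ≤ B := by nlinarith
  -- N := ceil B, exC N ≥ exF B
  set N := ⌈B⌉₊ with hN
  have hNB : B ≤ (N:ℝ) + 4 := by
    have := Nat.le_ceil B
    linarith
  have hexCN : exF B ≤ exC N := exF_mono hB4 hNB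
  -- lower bound for exF B
  have hlogB : ℓ / 2 ≤ Real.log B := by
    have h1 : s ^ (1/2:ℝ) ≤ B := by nlinarith [Real.rpow_nonneg hs0.le (1/2:ℝ)]
    calc ℓ / 2 = Real.log (s ^ (1/2:ℝ)) := by rw [Real.log_rpow hs0]; ring
      _ ≤ Real.log B := Real.log_le_log (Real.rpow_pos_of_pos hs0 _) h1
  have hlogB0 : 0 < ℓ / 2 := by linarith
  have hloglogB : m - Real.log 2 ≤ Real.log (Real.log B) := by
    calc m - Real.log 2 = Real.log (ℓ / 2) := by rw [Real.log_div (ne_of_gt hℓ0) (by norm_num)]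
      _ ≤ Real.log (Real.log B) := Real.log_le_log (by positivity) hlogB
  have hmlog2 : 0 < m - Real.log 2 := by
    have := Real.log_two_lt_d9
    linarith
  have hexFB : B * (ℓ/2) * (m - Real.log 2) ≤ exF B := by
    unfold exF
    have h1 : B * (ℓ/2) ≤ B * Real.log B := mul_le_mul_of_nonneg_left hlogB hB0.le
    have h2 : 0 ≤ B * Real.log B := le_trans (by positivity) h1
    calc B * (ℓ/2) * (m - Real.log 2) ≤ (B * Real.log B) * (m - Real.log 2) :=
          mul_le_mul_of_nonneg_right h1 hmlog2.le
      _ ≤ (B * Real.log B) * Real.log (Real.log B) :=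
          mul_le_mul_of_nonneg_left hloglogB h2
  have hfinal : s ≤ B * (ℓ/2) * (m - Real.log 2) := by
    have heq : B * (ℓ/2) * (m - Real.log 2) = 3 * s * (m - Real.log 2) / (2 * m) := by
      rw [hB]; field_simp
    rw [heq, le_div_iff₀ (by positivity)]
    have hlog2 : Real.log 2 < 1 := by have := Real.log_two_lt_d9; linarith
    nlinarith
  linarith

lemma exA_mono (ρ : ℝ) (hρ : 0 < ρ) : Monotone (fun k => exC k ^ (ρ⁻¹:ℝ)) := by
  intro k l hkl
  exact Real.rpow_le_rpow (exC_pos k).le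
    (exF_mono (exC4 k) (by push_cast; exact_mod_cast add_le_add_left (Nat.cast_le.2 hkl) 4))
    (inv_nonneg.2 hρ.le)

open Real in
lemma ex_main4 (ρ : ℝ) (hρ : 0 < ρ) :
    Tendsto (fun r => Real.log r * (Nat.card {k : ℕ | exC k ^ (ρ⁻¹:ℝ) < r} : ℝ) / r ^ ρ)
      atTop (nhds 0) := by
  have hs_t : Tendsto (fun r : ℝ => r ^ ρ) atTop atTop := tendsto_rpow_atTop hρ
  have hm_t : Tendsto (fun r : ℝ => Real.log (Real.log (r ^ ρ))) atTop atTop :=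
    Real.tendsto_log_atTop.comp (Real.tendsto_log_atTop.comp hs_t)
  have hg1 : Tendsto (fun r : ℝ => 3 / (ρ * Real.log (Real.log (r ^ ρ)))) atTop (nhds 0) :=
    tendsto_const_nhds.div_atTop (hm_t.const_mul_atTop hρ)
  have hg2 : Tendsto (fun r : ℝ => Real.log r / r ^ ρ) atTop (nhds 0) :=
    (isLittleO_log_rpow_atTop hρ).tendsto_div_nhds_zero
  have hg : Tendsto (fun r : ℝ => 3 / (ρ * Real.log (Real.log (r ^ ρ))) + Real.log r / r ^ ρ)
      atTop (nhds 0) := by simpa using hg1.add hg2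
  have h_lb : ∀ᶠ r : ℝ in atTop,
      0 ≤ Real.log r * (Nat.card {k : ℕ | exC k ^ (ρ⁻¹:ℝ) < r} : ℝ) / r ^ ρ := by
    filter_upwards [eventually_ge_atTop (1:ℝ)] with r hr
    exact div_nonneg (mul_nonneg (Real.log_nonneg hr) (Nat.cast_nonneg _))
      (Real.rpow_nonneg (by linarith) ρ)
  have h_ub : ∀ᶠ r : ℝ in atTop,
      Real.log r * (Nat.card {k : ℕ | exC k ^ (ρ⁻¹:ℝ) < r} : ℝ) / r ^ ρ
        ≤ 3 / (ρ * Real.log (Real.log (r ^ ρ))) + Real.log r / r ^ ρ := by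
    filter_upwards [hs_t.eventually ex_key, eventually_ge_atTop (2:ℝ)] with r hk hr2
    obtain ⟨hm0, hsC⟩ := hk
    have hr0 : (0:ℝ) < r := by linarith
    have hs0 : 0 < r ^ ρ := Real.rpow_pos_of_pos hr0 ρ
    have hlr : 0 < Real.log r := Real.log_pos (by linarith)
    have hls : Real.log (r ^ ρ) = ρ * Real.log r := Real.log_rpow hr0 ρ
    have hℓ0 : 0 < Real.log (r ^ ρ) := by rw [hls]; positivity
    set M := ⌈3 * r ^ ρ / (Real.log (r ^ ρ) * Real.log (Real.log (r ^ ρ)))⌉₊ with hM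
    have hra : r ≤ exC M ^ (ρ⁻¹:ℝ) := by
      have h1 : (r ^ ρ) ^ (ρ⁻¹:ℝ) ≤ exC M ^ (ρ⁻¹:ℝ) :=
        Real.rpow_le_rpow hs0.le hsC (inv_nonneg.2 hρ.le)
      rwa [← Real.rpow_mul hr0.le, mul_inv_cancel₀ hρ.ne', Real.rpow_one] at h1
    have hcount : (Nat.card {k : ℕ | exC k ^ (ρ⁻¹:ℝ) < r} : ℝ) ≤ M :=
      Nat.cast_le.2 (ex_count_le (exA_mono ρ hρ) hra)
    have harg : 0 ≤ 3 * r ^ ρ / (Real.log (r ^ ρ) * Real.log (Real.log (r ^ ρ))) := by positivity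
    have hceil : (M:ℝ) ≤ 3 * r ^ ρ / (Real.log (r ^ ρ) * Real.log (Real.log (r ^ ρ))) + 1 :=
      (Nat.ceil_lt_add_one harg).le
    have key2 : Real.log r * (Nat.card {k : ℕ | exC k ^ (ρ⁻¹:ℝ) < r} : ℝ) / r ^ ρ
        ≤ Real.log r * (3 * r ^ ρ / (Real.log (r ^ ρ) * Real.log (Real.log (r ^ ρ))) + 1) / r ^ ρ := by
      gcongr
      exact hcount.trans hceil
    have key3 : Real.log r * (3 * r ^ ρ / (Real.log (r ^ ρ) * Real.log (Real.log (r ^ ρ))) + 1) / r ^ ρ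
        = 3 / (ρ * Real.log (Real.log (r ^ ρ))) + Real.log r / r ^ ρ := by
      have h1 : Real.log r ≠ 0 := hlr.ne'
      have h2 : Real.log (Real.log (r ^ ρ)) ≠ 0 := hm0.ne'
      rw [hls] at *
      field_simp
    linarith [key2, key3.le]
  exact tendsto_of_tendsto_of_tendsto_of_le_of_le' tendsto_const_nhds hg h_lb h_ub


/-- Example 1 of the paper: for every `ρ > 0` there is a nondecreasing sequence `(a_k)` of
positive reals tending to infinity whose counting function `n(r) = #{k : a_k < r}` satisfies:
`∑ 1/a_k^ρ = ∞`, `∑ 1/a_k^(ρ+ε) < ∞` for every `ε > 0`, `n(r)/r^ρ → 0`, and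
`(ln r)·n(r)/r^ρ → 0`. -/
theorem stmt_6 (ρ : ℝ) (hρ : 0 < ρ) :
    ∃ a : ℕ → ℝ, (∀ k, 0 < a k) ∧ Monotone a ∧ Tendsto a atTop atTop ∧
      (¬ Summable fun k => 1 / a k ^ ρ) ∧
      (∀ ε > 0, Summable fun k => 1 / a k ^ (ρ + ε)) ∧
      Tendsto (fun r => (Nat.card {k : ℕ | a k < r} : ℝ) / r ^ ρ) atTop (nhds 0) ∧
      Tendsto (fun r => Real.log r * (Nat.card {k : ℕ | a k < r} : ℝ) / r ^ ρ)
        atTop (nhds 0) := by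
  refine ⟨fun k => exC k ^ (ρ⁻¹ : ℝ), fun k => Real.rpow_pos_of_pos (exC_pos k) _, ?_, ?_, ?_, ?_, ?_, ?_⟩
  case refine_1 =>
    intro k l hkl
    exact Real.rpow_le_rpow (exC_pos k).le
      (exF_mono (exC4 k) (by push_cast; exact_mod_cast add_le_add_left (Nat.cast_le.2 hkl) 4))
      (inv_nonneg.2 hρ.le)
  case refine_2 =>
    have hc0 : 0 < Real.log 4 * Real.log (Real.log 4) := by
      have h1 := ex_one_lt_log4
      have h2 : 0 < Real.log (Real.log 4) := Real.log_pos h1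
      positivity
    have h1 : Tendsto (fun k : ℕ => (Real.log 4 * Real.log (Real.log 4)) * ((k:ℝ)+4)) atTop atTop := by
      apply Tendsto.const_mul_atTop hc0
      apply tendsto_atTop_add_const_right
      exact tendsto_natCast_atTop_atTop
    have h2 : Tendsto exC atTop atTop := by
      apply tendsto_atTop_mono _ h1
      intro k
      have h4 := exC4 k
      have hl1 : Real.log 4 ≤ Real.log ((k:ℝ)+4) := Real.log_le_log (by norm_num) h4
      have hl2 : Real.log (Real.log 4) ≤ Real.log (Real.log ((k:ℝ)+4)) :=
        Real.log_le_log (by linarith [ex_one_lt_log4]) hl1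
      have h3 : 0 < Real.log (Real.log 4) := Real.log_pos ex_one_lt_log4
      have hL0 : (0:ℝ) ≤ Real.log ((k:ℝ)+4) := le_trans (by linarith [ex_one_lt_log4]) hl1
      have hLM : Real.log 4 * Real.log (Real.log 4)
          ≤ Real.log ((k:ℝ)+4) * Real.log (Real.log ((k:ℝ)+4)) :=
        mul_le_mul hl1 hl2 h3.le hL0
      show (Real.log 4 * Real.log (Real.log 4)) * ((k:ℝ)+4) ≤ exC k
      unfold exC exF
      nlinarith
    exact (tendsto_rpow_atTop (inv_pos.2 hρ)).comp h2
  case refine_3 =>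
    have hpow : ∀ k : ℕ, (exC k ^ (ρ⁻¹:ℝ)) ^ ρ = exC k := fun k => by
      rw [← Real.rpow_mul (exC_pos k).le, inv_mul_cancel₀ hρ.ne', Real.rpow_one]
    intro h
    exact not_summable_inv_exC (h.congr fun k => by rw [hpow k])
  case refine_4 =>
    intro ε hε
    have hpow : ∀ k : ℕ, (exC k ^ (ρ⁻¹:ℝ)) ^ (ρ + ε) = exC k ^ (1 + ε/ρ) := fun k => by
      rw [← Real.rpow_mul (exC_pos k).le]
      congr 1
      field_simp
    exact (summable_inv_exC_rpow (by positivity : 0 < ε/ρ)).congr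
      fun k => by rw [hpow k]
  case refine_5 =>
    have hiv := ex_main4 ρ hρ
    have hinv : Tendsto (fun r : ℝ => (Real.log r)⁻¹) atTop (nhds 0) :=
      Real.tendsto_log_atTop.inv_tendsto_atTop
    have hprod : Tendsto
        (fun r : ℝ => (Real.log r)⁻¹ *
          (Real.log r * (Nat.card {k : ℕ | exC k ^ (ρ⁻¹:ℝ) < r} : ℝ) / r ^ ρ))
        atTop (nhds 0) := by simpa using hinv.mul hiv
    apply hprod.congr'
    filter_upwards [eventually_ge_atTop (2:ℝ)] with r hr
    have hlr : Real.log r ≠ 0 := ne_of_gt (Real.log_pos (by linarith))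
    field_simp
  case refine_6 => exact ex_main4 ρ hρ
end

section
/- Let (b_i)_{i≥1} be a nondecreasing sequence of real numbers with b_i > 1 and b_i → ∞, let γ > 0, and suppose i · (ln b_i)/b_i^γ → 0 as i → ∞. Then the counting function n(r) = #{i : b_i < r} satisfies n(r)·(ln r)/r^γ → 0 as r → ∞. -/
open Filter

lemma aux_antitone (γ : ℝ) (hγ : 0 < γ) {s t : ℝ} (hs : Real.exp (1/γ) ≤ s) (hst : s ≤ t) :
    Real.log t / t ^ γ ≤ Real.log s / s ^ γ :=
  Real.log_div_self_rpow_antitoneOn hγ (by rw [Set.mem_Ici, ← one_div]; exact hs)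
    (by rw [Set.mem_Ici, ← one_div]; exact le_trans hs hst) hst

/-- If `(b_i)` is a nondecreasing sequence of reals `> 1` tending to infinity, `γ > 0`,
and `i·ln(b_i)/b_i^γ → 0`, then the counting function `n(r) = #{i : b_i < r}` satisfies
`n(r)·ln r / r^γ → 0` as `r → ∞`. -/
theorem stmt_8 (b : ℕ → ℝ) (hb1 : ∀ i, 1 < b i) (hmono : Monotone b)
    (htend : Tendsto b atTop atTop) (γ : ℝ) (hγ : 0 < γ)
    (h : Tendsto (fun i : ℕ => (i : ℝ) * Real.log (b i) / b i ^ γ) atTop (nhds 0)) :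
    Tendsto (fun r : ℝ => (Nat.card {i : ℕ | b i < r} : ℝ) * Real.log r / r ^ γ)
      atTop (nhds 0) := by
  classical
  -- log(b i)/(b i)^γ → 0
  have h2 : Tendsto (fun i : ℕ => Real.log (b i) / b i ^ γ) atTop (nhds 0) := by
    have hprod : Tendsto
        (fun i : ℕ => ((i : ℝ) * Real.log (b i) / b i ^ γ) * ((i : ℝ)⁻¹)) atTop (nhds 0) := by
      simpa using h.mul (tendsto_inv_atTop_zero.comp tendsto_natCast_atTop_atTop)
    refine hprod.congr' ?_
    filter_upwards [eventually_ge_atTop 1] with i hi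
    have hi0 : (i : ℝ) ≠ 0 := by positivity
    have hB : b i ^ γ ≠ 0 := (Real.rpow_pos_of_pos (lt_trans one_pos (hb1 i)) γ).ne'
    field_simp
  have hc : Tendsto (fun i : ℕ => ((i : ℝ) + 1) * Real.log (b i) / b i ^ γ) atTop (nhds 0) := by
    have := h.add h2
    simp only [add_zero] at this
    refine this.congr fun i => ?_
    have : b i ^ γ ≠ 0 := (Real.rpow_pos_of_pos (lt_trans one_pos (hb1 i)) γ).ne'
    field_simp
  have hex : ∀ r : ℝ, ∃ i, r ≤ b i := fun r =>
    (htend.eventually (eventually_ge_atTop r)).exists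
  rw [Metric.tendsto_nhds]
  intro ε hε
  -- choose I such that for i ≥ I the bound holds and b i is large
  obtain ⟨I₁, hI₁⟩ := (Metric.tendsto_atTop.1 hc) ε hε
  obtain ⟨I₂, hI₂⟩ := (htend.eventually (eventually_ge_atTop (Real.exp (1/γ)))).exists_forall_of_atTop
  set I := max I₁ I₂ with hIdef
  filter_upwards [eventually_ge_atTop (max (b I + 1) (Real.exp (1/γ)))] with r hr
  have hrbI : b I < r := lt_of_lt_of_le (lt_add_one _) (le_trans (le_max_left _ _) hr)
  have hrexp : Real.exp (1/γ) ≤ r := le_trans (le_max_right _ _) hr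
  have hr1 : 1 < r := lt_of_lt_of_le (by
      have := Real.exp_pos (1/γ)
      nlinarith [Real.add_one_le_exp (1/γ), one_div_pos.2 hγ]) hrexp
  -- the counting set is an initial segment
  set m := Nat.find (hex r) with hmdef
  have hm_spec : r ≤ b m := Nat.find_spec (hex r)
  have hset : {i : ℕ | b i < r} = Set.Iio m := by
    ext i
    simp only [Set.mem_setOf_eq, Set.mem_Iio]
    constructor
    · intro hi
      by_contra hmi
      push_neg at hmi
      exact absurd (le_trans hm_spec (hmono hmi)) (not_le.2 hi)
    · intro hi
      exact lt_of_not_ge (Nat.find_min (hex r) hi)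
  have hcard : (Nat.card {i : ℕ | b i < r} : ℝ) = (m : ℝ) := by
    rw [hset]; simp
  clear hmdef
  clear_value m
  -- I < m
  have hIm : I < m := by
    have : I ∈ Set.Iio m := by rw [← hset]; exact hrbI
    exact this
  obtain ⟨j, rfl⟩ : ∃ j, m = j + 1 := ⟨m - 1, by omega⟩
  have hjI : I ≤ j := by omega
  have hbj_lt : b j < r := by
    have : j ∈ Set.Iio (j + 1) := by simp
    rw [← hset] at this
    exact this
  have hbj_exp : Real.exp (1/γ) ≤ b j := hI₂ j (le_trans (le_max_right _ _) hjI)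
  have hlog_le : Real.log r / r ^ γ ≤ Real.log (b j) / b j ^ γ :=
    aux_antitone γ hγ hbj_exp hbj_lt.le
  have hbound := hI₁ j (le_trans (le_max_left _ _) hjI)
  rw [Real.dist_eq, sub_zero] at hbound ⊢
  have hbj1 : 1 < b j := hb1 j
  have habs : |((j : ℝ) + 1) * Real.log (b j) / b j ^ γ| =
      ((j : ℝ) + 1) * Real.log (b j) / b j ^ γ := by
    apply abs_of_nonneg
    have h1 : 0 ≤ Real.log (b j) := Real.log_nonneg hbj1.le
    have h2 : (0:ℝ) < b j ^ γ := Real.rpow_pos_of_pos (lt_trans one_pos hbj1) γ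
    exact div_nonneg (mul_nonneg (by positivity) h1) h2.le
  rw [habs] at hbound
  have hnonneg : 0 ≤ (Nat.card {i : ℕ | b i < r} : ℝ) * Real.log r / r ^ γ := by
    have h1 : 0 ≤ Real.log r := Real.log_nonneg hr1.le
    have h2 : (0:ℝ) < r ^ γ := Real.rpow_pos_of_pos (lt_trans one_pos hr1) γ
    exact div_nonneg (mul_nonneg (Nat.cast_nonneg _) h1) h2.le
  rw [abs_of_nonneg hnonneg, hcard]
  calc ((j + 1 : ℕ) : ℝ) * Real.log r / r ^ γ
      = ((j : ℝ) + 1) * (Real.log r / r ^ γ) := by push_cast; ring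
    _ ≤ ((j : ℝ) + 1) * (Real.log (b j) / b j ^ γ) := by
        exact mul_le_mul_of_nonneg_left hlog_le (by positivity)
    _ = ((j : ℝ) + 1) * Real.log (b j) / b j ^ γ := by ring
    _ < ε := hbound
end

section
/- Let H be a complex Hilbert space, M ⊆ H a linear subspace equipped with a second norm ‖·‖₊ satisfying ‖f‖ ≤ C₀‖f‖₊ for all f ∈ M (C₀ > 0), and let W : M → H be a linear map such that Re⟪Wf, f⟫ ≥ C₂‖f‖₊² and |Im⟪Wf, f⟫| ≤ C₃‖f‖₊·‖f‖ for all f ∈ M, where C₂, C₃ > 0. Then for every k > 0 and all f ∈ M, Re⟪Wf, f⟫ − k·|Im⟪Wf, f⟫| ≥ ι‖f‖², where ι = C₂/(2C₀²) − k²C₃²/(2C₂); equivalently, the numerical range of W is contained in the sector with vertex ι on the real axis and semi-angle arctan(1/k). -/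
local notation "⟪" x ", " y "⟫" => @inner ℂ _ _ x y

/-- Sectoriality under hypothesis (H3): if `‖f‖ ≤ C₀·N f`, `Re⟪Wf,f⟫ ≥ C₂·(N f)²` and
`|Im⟪Wf,f⟫| ≤ C₃·N f·‖f‖` on the domain `M`, then for every `k > 0` and `f ∈ M`,
`Re⟪Wf,f⟫ - k·|Im⟪Wf,f⟫| ≥ ι‖f‖²` with `ι = C₂/(2C₀²) - k²C₃²/(2C₂)`. -/
theorem stmt_11 {H : Type*} [NormedAddCommGroup H] [InnerProductSpace ℂ H]
    (M : Submodule ℂ H) (N : H → ℝ) (W : M →ₗ[ℂ] H)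
    (C₀ C₂ C₃ : ℝ) (hC₀ : 0 < C₀) (hC₂ : 0 < C₂) (hC₃ : 0 < C₃)
    (hemb : ∀ f : M, ‖(f : H)‖ ≤ C₀ * N f)
    (hre : ∀ f : M, C₂ * (N f) ^ 2 ≤ (⟪W f, (f : H)⟫).re)
    (him : ∀ f : M, |(⟪W f, (f : H)⟫).im| ≤ C₃ * N f * ‖(f : H)‖) :
    ∀ k : ℝ, 0 < k → ∀ f : M,
      (C₂ / (2 * C₀ ^ 2) - k ^ 2 * C₃ ^ 2 / (2 * C₂)) * ‖(f : H)‖ ^ 2 ≤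
        (⟪W f, (f : H)⟫).re - k * |(⟪W f, (f : H)⟫).im| := by
  intro k hk f
  have hemb' := hemb f
  have hre' := hre f
  have him' := him f
  have hn : 0 ≤ ‖(f : H)‖ := norm_nonneg _
  have hN : 0 ≤ N f := nonneg_of_mul_nonneg_right (hn.trans hemb') hC₀
  have hnorm2 : ‖(f : H)‖ ^ 2 ≤ C₀ ^ 2 * (N f) ^ 2 := by nlinarith
  have key : k * |(⟪W f, (f : H)⟫).im| ≤ C₂ / 2 * (N f) ^ 2 + k ^ 2 * C₃ ^ 2 / (2 * C₂) * ‖(f : H)‖ ^ 2 := by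
    have h1 : k * |(⟪W f, (f : H)⟫).im| ≤ k * (C₃ * N f * ‖(f : H)‖) :=
      mul_le_mul_of_nonneg_left him' hk.le
    have h2 : k * (C₃ * N f * ‖(f : H)‖) ≤ (C₂ ^ 2 * (N f) ^ 2 + k ^ 2 * C₃ ^ 2 * ‖(f : H)‖ ^ 2) / (2 * C₂) := by
      rw [le_div_iff₀ (by positivity)]
      nlinarith [sq_nonneg (C₂ * N f - k * C₃ * ‖(f : H)‖)]
    have h4 : (C₂ ^ 2 * (N f) ^ 2 + k ^ 2 * C₃ ^ 2 * ‖(f : H)‖ ^ 2) / (2 * C₂)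
        = C₂ / 2 * (N f) ^ 2 + k ^ 2 * C₃ ^ 2 / (2 * C₂) * ‖(f : H)‖ ^ 2 := by
      field_simp
    linarith
  have h3 : C₂ / (2 * C₀ ^ 2) * ‖(f : H)‖ ^ 2 ≤ C₂ / 2 * (N f) ^ 2 := by
    rw [div_mul_eq_mul_div, div_le_iff₀ (by positivity)]
    nlinarith
  nlinarith
end

section
/- Let (λ_n)_{n≥1} be a nondecreasing sequence of positive real numbers tending to infinity and let p > 0. If (λ_{n+1} − λ_n)/λ_n^{(p−1)/p} → 0 as n → ∞, then λ_n/n^p → 0 as n → ∞. -/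
open Filter

/-- Mean value inequality for `rpow` on `[a, b]` with `b ≤ 2a`. -/
lemma mvt_rpow_aux {q a b : ℝ} (hq : 0 < q) (ha : 0 < a) (hab : a ≤ b) (hb2 : b ≤ 2 * a) :
    b ^ q - a ^ q ≤ q * 2 ^ q * (a ^ (q - 1) * (b - a)) := by
  rcases eq_or_lt_of_le hab with rfl | hlt
  · simp
  obtain ⟨c, hc, hc'⟩ := exists_hasDerivAt_eq_slope (fun x => x ^ q)
      (fun x => q * x ^ (q - 1)) hlt
      (fun x hx => (Real.continuousAt_rpow_const x q
        (Or.inl (ne_of_gt (lt_of_lt_of_le ha hx.1)))).continuousWithinAt)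
      (fun x hx => Real.hasDerivAt_rpow_const (Or.inl (ne_of_gt (lt_trans ha hx.1))))
  have hc0 : 0 < c := lt_trans ha hc.1
  have hba : 0 < b - a := sub_pos.mpr hlt
  have hslope : b ^ q - a ^ q = q * c ^ (q - 1) * (b - a) := by
    field_simp at hc'
    linarith [hc']
  have hbound : c ^ (q - 1) ≤ 2 ^ q * a ^ (q - 1) := by
    rcases le_or_gt 1 q with hq1 | hq1
    · have h1 : c ^ (q - 1) ≤ (2 * a) ^ (q - 1) :=
        Real.rpow_le_rpow hc0.le (le_trans hc.2.le hb2) (by linarith)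
      have h2 : ((2 : ℝ) * a) ^ (q - 1) = 2 ^ (q - 1) * a ^ (q - 1) :=
        Real.mul_rpow (by norm_num) ha.le
      have h3 : (2 : ℝ) ^ (q - 1) ≤ 2 ^ q :=
        Real.rpow_le_rpow_of_exponent_le one_le_two (by linarith)
      rw [h2] at h1
      exact h1.trans (mul_le_mul_of_nonneg_right h3 (Real.rpow_nonneg ha.le _))
    · have h1 : c ^ (q - 1) ≤ a ^ (q - 1) :=
        Real.rpow_le_rpow_of_nonpos ha hc.1.le (by linarith)
      have h2 : (1 : ℝ) ≤ 2 ^ q := Real.one_le_rpow one_le_two hq.le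
      calc c ^ (q - 1) ≤ a ^ (q - 1) := h1
        _ = 1 * a ^ (q - 1) := by ring
        _ ≤ 2 ^ q * a ^ (q - 1) :=
            mul_le_mul_of_nonneg_right h2 (Real.rpow_nonneg ha.le _)
  calc b ^ q - a ^ q = q * c ^ (q - 1) * (b - a) := hslope
    _ ≤ q * (2 ^ q * a ^ (q - 1)) * (b - a) := by
        have := mul_le_mul_of_nonneg_left hbound hq.le
        exact mul_le_mul_of_nonneg_right this hba.le
    _ = q * 2 ^ q * (a ^ (q - 1) * (b - a)) := by ring

/-- (Agranovich) If `(λ_n)` is a nondecreasing sequence of positive reals tending to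
infinity, `p > 0`, and `(λ_{n+1} - λ_n)/λ_n^((p-1)/p) → 0`, then `λ_n/n^p → 0`. -/
theorem stmt_13 (lam : ℕ → ℝ) (hpos : ∀ n, 0 < lam n) (hmono : Monotone lam)
    (htend : Tendsto lam atTop atTop) (p : ℝ) (hp : 0 < p)
    (h : Tendsto (fun n : ℕ => (lam (n + 1) - lam n) / lam n ^ ((p - 1) / p))
      atTop (nhds 0)) :
    Tendsto (fun n : ℕ => lam n / (n : ℝ) ^ p) atTop (nhds 0) := by
  set q : ℝ := p⁻¹ with hqdef
  have hq0 : 0 < q := inv_pos.mpr hp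
  set μ : ℕ → ℝ := fun n => lam n ^ q with hμdef
  have hμpos : ∀ n, 0 < μ n := fun n => Real.rpow_pos_of_pos (hpos n) q
  have hqe : q - 1 = -((p - 1) / p) := by
    rw [hqdef]
    field_simp
    ring
  -- Step 1: differences of μ tend to 0
  have hd : Tendsto (fun n => μ (n + 1) - μ n) atTop (nhds 0) := by
    have hev1 : ∀ᶠ n in atTop, 1 ≤ lam n := htend.eventually_ge_atTop 1
    have hev2 : ∀ᶠ n in atTop,
        (lam (n + 1) - lam n) / lam n ^ ((p - 1) / p) ≤ 1 :=
      h.eventually (eventually_le_nhds one_pos)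
    apply squeeze_zero'
    · filter_upwards with n
      exact sub_nonneg.mpr (Real.rpow_le_rpow (hpos n).le (hmono (Nat.le_succ n)) hq0.le)
    · filter_upwards [hev1, hev2] with n h1 h2
      have hden : 0 < lam n ^ ((p - 1) / p) := Real.rpow_pos_of_pos (hpos n) _
      have hlam2 : lam (n + 1) ≤ 2 * lam n := by
        have h3 : lam (n + 1) - lam n ≤ lam n ^ ((p - 1) / p) :=
          (div_le_one hden).mp h2
        have h4 : lam n ^ ((p - 1) / p) ≤ lam n := by
          nth_rewrite 2 [← Real.rpow_one (lam n)]
          apply Real.rpow_le_rpow_of_exponent_le h1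
          rw [div_le_one hp]; linarith
        linarith
      have hkey := mvt_rpow_aux hq0 (hpos n) (hmono (Nat.le_succ n)) hlam2
      calc μ (n + 1) - μ n ≤ q * 2 ^ q * (lam n ^ (q - 1) * (lam (n + 1) - lam n)) := hkey
        _ = q * 2 ^ q * ((lam (n + 1) - lam n) / lam n ^ ((p - 1) / p)) := by
            rw [hqe, Real.rpow_neg (hpos n).le]
            ring
    · have := h.const_mul (q * 2 ^ q)
      simpa using this
  -- Step 2: Cesàro implies μ n / n → 0
  have hces : Tendsto (fun n : ℕ => (n : ℝ)⁻¹ * μ n) atTop (nhds 0) := by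
    have c1 := hd.cesaro
    have c1' : Tendsto (fun n : ℕ => (n : ℝ)⁻¹ * (μ n - μ 0)) atTop (nhds 0) := by
      simpa only [smul_eq_mul, Finset.sum_range_sub] using c1
    have c2 : Tendsto (fun n : ℕ => (n : ℝ)⁻¹ * μ 0) atTop (nhds 0) := by
      have : Tendsto (fun n : ℕ => (n : ℝ)⁻¹) atTop (nhds 0) :=
        tendsto_inv_atTop_zero.comp tendsto_natCast_atTop_atTop
      simpa using this.mul_const (μ 0)
    have hsum := c1'.add c2
    simp only [add_zero] at hsum
    convert hsum using 2 with n
    ring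
  -- Step 3: conclude
  have hfin := hces.rpow_const (Or.inr hp.le)
  rw [Real.zero_rpow hp.ne'] at hfin
  apply hfin.congr'
  filter_upwards [eventually_gt_atTop 0] with n hn
  have hn' : (0 : ℝ) < n := by exact_mod_cast hn
  show ((n : ℝ)⁻¹ * μ n) ^ p = lam n / (n : ℝ) ^ p
  rw [Real.mul_rpow (inv_nonneg.mpr hn'.le) (hμpos n).le, Real.inv_rpow hn'.le]
  have : μ n ^ p = lam n := by
    rw [hμdef]
    simp only
    rw [← Real.rpow_mul (hpos n).le, hqdef, inv_mul_cancel₀ hp.ne', Real.rpow_one]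
  rw [this]
  ring
end

section
/- Let (λ_n)_{n≥1} be a nondecreasing sequence of positive real numbers such that λ_n ≥ C·n^τ for all n, where C > 0 and τ > 0. Then there exist K > 0 and a strictly increasing sequence of indices (N_ν)_{ν≥0} such that λ_{N_ν+1} − λ_{N_ν} ≥ K·λ_{N_ν+1}^{1−1/τ} for every ν. -/
open Filter

lemma gap_aux {s a b : ℝ} (hs : 0 < s) (ha : 0 < a) (hab : a ≤ b) :
    b ^ s - a ^ s ≤ max 1 s * b ^ (s - 1) * (b - a) := by
  have hb : 0 < b := lt_of_lt_of_le ha hab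
  rcases le_total s 1 with h1 | h1
  · -- b^s - a^s ≤ 1 * b^(s-1) * (b-a)
    have key : a * b ^ (s - 1) ≤ a ^ s := by
      have : b ^ (s - 1) ≤ a ^ (s - 1) :=
        Real.rpow_le_rpow_of_nonpos ha hab (by linarith)
      have haa : a * a ^ (s - 1) = a ^ s := by
        nth_rewrite 1 [← Real.rpow_one a]
        rw [← Real.rpow_add ha]; ring_nf
      calc a * b ^ (s - 1) ≤ a * a ^ (s - 1) := mul_le_mul_of_nonneg_left this ha.le
        _ = a ^ s := haa
    have hbs : b ^ s = b * b ^ (s - 1) := by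
      nth_rewrite 1 [show s = 1 + (s - 1) by ring]
      rw [Real.rpow_add hb, Real.rpow_one]
    have hmax : (1 : ℝ) ≤ max 1 s := le_max_left _ _
    have hnn : 0 ≤ b ^ (s - 1) * (b - a) := by
      have := Real.rpow_nonneg hb.le (s - 1)
      nlinarith
    nlinarith [Real.rpow_nonneg hb.le (s - 1)]
  · -- Bernoulli: 1 + s * z ≤ (1+z)^s with z = a/b - 1
    have hz : (-1 : ℝ) ≤ a / b - 1 := by
      have : 0 ≤ a / b := by positivity
      linarith
    have hber := one_add_mul_self_le_rpow_one_add hz h1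
    have h1z : (1 : ℝ) + (a / b - 1) = a / b := by ring
    rw [h1z] at hber
    -- multiply by b^s
    have hbs : 0 < b ^ s := Real.rpow_pos_of_pos hb s
    have hdiv : (a / b) ^ s = a ^ s / b ^ s := Real.div_rpow ha.le hb.le s
    rw [hdiv] at hber
    have hmul : (1 + s * (a / b - 1)) * b ^ s ≤ a ^ s := by
      have := mul_le_mul_of_nonneg_right hber hbs.le
      rwa [div_mul_cancel₀ _ hbs.ne'] at this
    have hbs1 : b ^ s = b * b ^ (s - 1) := by
      nth_rewrite 1 [show s = 1 + (s - 1) by ring]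
      rw [Real.rpow_add hb, Real.rpow_one]
    have habb : a / b * b = a := div_mul_cancel₀ a hb.ne'
    have hmax : s ≤ max 1 s := le_max_right _ _
    have hnn : 0 ≤ b ^ (s - 1) * (b - a) := by
      have := Real.rpow_nonneg hb.le (s - 1)
      nlinarith
    -- expand: (1 + s*(a/b - 1)) * b^s = b^s + s*(a - b)*b^(s-1)
    have hexp : (1 + s * (a / b - 1)) * b ^ s = b ^ s + s * (a - b) * b ^ (s - 1) := by
      rw [hbs1]; field_simp
    rw [hexp] at hmul
    nlinarith [Real.rpow_nonneg hb.le (s - 1)]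

/-- Subsequence-with-gaps construction: if `(λ_n)` is a nondecreasing sequence of positive
reals with `λ_n ≥ C·n^τ` (`C, τ > 0`), then there exist `K > 0` and a strictly increasing
sequence of indices `(N_ν)` with `λ_{N_ν + 1} - λ_{N_ν} ≥ K·λ_{N_ν + 1}^(1 - 1/τ)`. -/
theorem stmt_14 (lam : ℕ → ℝ) (hpos : ∀ n, 0 < lam n) (hmono : Monotone lam)
    (C τ : ℝ) (hC : 0 < C) (hτ : 0 < τ)
    (hgrow : ∀ n : ℕ, C * (n : ℝ) ^ τ ≤ lam n) :
    ∃ K : ℝ, 0 < K ∧ ∃ N : ℕ → ℕ, StrictMono N ∧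
      ∀ ν : ℕ, K * lam (N ν + 1) ^ (1 - 1 / τ) ≤ lam (N ν + 1) - lam (N ν) := by
  set s : ℝ := 1 / τ with hs
  have hs0 : 0 < s := by positivity
  set M : ℝ := max 1 s with hM
  have hM0 : (0 : ℝ) < M := lt_of_lt_of_le one_pos (le_max_left _ _)
  set K : ℝ := C ^ s / (2 * M) with hK
  have hK0 : 0 < K := by
    have : (0 : ℝ) < C ^ s := Real.rpow_pos_of_pos hC s
    positivity
  refine ⟨K, hK0, ?_⟩
  have hinf : {n : ℕ | K * lam (n + 1) ^ (1 - s) ≤ lam (n + 1) - lam n}.Infinite := by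
    by_contra hfin
    rw [Set.not_infinite] at hfin
    obtain ⟨m, hm⟩ := hfin.bddAbove
    set n₀ := m + 1 with hn₀def
    have hsmall : ∀ n ≥ n₀, lam (n + 1) - lam n < K * lam (n + 1) ^ (1 - s) := by
      intro n hn
      by_contra h
      push_neg at h
      have := hm (Set.mem_setOf.mpr h)
      omega
    -- step bound
    have step : ∀ n ≥ n₀, lam (n + 1) ^ s - lam n ^ s ≤ M * K := by
      intro n hn
      have hab : lam n ≤ lam (n + 1) := hmono (Nat.le_succ n)
      have hb : 0 < lam (n + 1) := hpos _
      have h1 := gap_aux hs0 (hpos n) hab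
      have h2 : lam (n + 1) - lam n ≤ K * lam (n + 1) ^ (1 - s) := (hsmall n hn).le
      have hbs1 : 0 ≤ lam (n + 1) ^ (s - 1) := Real.rpow_nonneg hb.le _
      have h3 : lam (n + 1) ^ s - lam n ^ s
          ≤ M * lam (n + 1) ^ (s - 1) * (K * lam (n + 1) ^ (1 - s)) := by
        calc lam (n + 1) ^ s - lam n ^ s ≤ M * lam (n + 1) ^ (s - 1) * (lam (n + 1) - lam n) :=
              h1
          _ ≤ M * lam (n + 1) ^ (s - 1) * (K * lam (n + 1) ^ (1 - s)) := by
              apply mul_le_mul_of_nonneg_left h2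
              positivity
      have hcancel : lam (n + 1) ^ (s - 1) * lam (n + 1) ^ (1 - s) = 1 := by
        rw [← Real.rpow_add hb]
        norm_num
      calc lam (n + 1) ^ s - lam n ^ s
          ≤ M * lam (n + 1) ^ (s - 1) * (K * lam (n + 1) ^ (1 - s)) := h3
        _ = M * K * (lam (n + 1) ^ (s - 1) * lam (n + 1) ^ (1 - s)) := by ring
        _ = M * K := by rw [hcancel, mul_one]
    -- chain
    have chain : ∀ n, n₀ ≤ n → lam n ^ s ≤ lam n₀ ^ s + M * K * ((n : ℝ) - n₀) := by
      intro n hn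
      induction n, hn using Nat.le_induction with
      | base => simp
      | succ n hn ih =>
        have := step n hn
        push_cast
        push_cast at ih
        linarith
    -- MK = C^s / 2
    have hMK : M * K = C ^ s / 2 := by
      rw [hK, mul_div_assoc', mul_comm 2 M, mul_div_mul_left _ _ hM0.ne']
    -- lower bound lam n ^ s ≥ C^s * n
    have hlow : ∀ n : ℕ, C ^ s * (n : ℝ) ≤ lam n ^ s := by
      intro n
      have h1 : (C * (n : ℝ) ^ τ) ^ s ≤ lam n ^ s := by
        apply Real.rpow_le_rpow (by positivity) (hgrow n) hs0.le
      have h2 : (C * (n : ℝ) ^ τ) ^ s = C ^ s * (n : ℝ) := by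
        rw [Real.mul_rpow hC.le (by positivity),
          ← Real.rpow_mul (Nat.cast_nonneg n)]
        have hts : τ * s = 1 := by rw [hs, mul_one_div_cancel hτ.ne']
        rw [hts, Real.rpow_one]
      rw [← h2]; exact h1
    -- contradiction for large n
    have hCs : 0 < C ^ s := Real.rpow_pos_of_pos hC s
    obtain ⟨n, hn⟩ := exists_nat_gt (max (n₀ : ℝ) ((lam n₀ ^ s + 1) / (C ^ s / 2)))
    have hnn₀ : n₀ ≤ n := by
      have := le_of_lt (lt_of_le_of_lt (le_max_left _ _) hn)
      exact_mod_cast this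
    have h1 := chain n hnn₀
    have h2 := hlow n
    have h3 : (lam n₀ ^ s + 1) / (C ^ s / 2) < (n : ℝ) :=
      lt_of_le_of_lt (le_max_right _ _) hn
    rw [div_lt_iff₀ (by positivity)] at h3
    have hn₀nn : (0 : ℝ) ≤ (n₀ : ℝ) := Nat.cast_nonneg _
    rw [hMK] at h1
    nlinarith [hCs]
  -- extract strictly monotone sequence
  haveI : Infinite ↥{n : ℕ | K * lam (n + 1) ^ (1 - s) ≤ lam (n + 1) - lam n} :=
    hinf.to_subtype
  set S := {n : ℕ | K * lam (n + 1) ^ (1 - s) ≤ lam (n + 1) - lam n} with hS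
  let e := Nat.Subtype.orderIsoOfNat S
  refine ⟨fun ν => (e ν : ℕ), ?_, ?_⟩
  · exact fun a b hab => Subtype.coe_lt_coe.mpr (e.strictMono hab)
  · intro ν
    exact (e ν).2
end
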